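/- arXiv:1111.2541 — 6 statements merged into one kernel-verified Lean document; each statement's English description precedes it below -/
import Mathlib

section
/- Let p, q ≥ 1 be integers and K ∈ 𝕂^{p,q}. Let φ : ℝ² → ℝ be 1-periodic in each of its two variables, with all partial derivatives up to order q continuous and bounded, and let v̄ := ∫₀¹∫₀¹ φ(y,s) dy ds be its mean value. Then there exists C > 0, depending only on K and φ, such that for all ε, η, τ > 0: | v̄ − ∫_ℝ∫_ℝ K_η(ξ) K_τ(s) φ(ξ/ε, s/ε) dξ ds | ≤ C [ (ε/η)^q + (ε/τ)^q ]. -/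
open MeasureTheory Set


noncomputable def Aop (g : ℝ → ℝ) : ℝ → ℝ :=
  fun x => (∫ t in (0:ℝ)..x, g t) - ∫ u in (0:ℝ)..1, ∫ t in (0:ℝ)..u, g t

lemma Aop_hasDerivAt {g : ℝ → ℝ} (hg : Continuous g) (x : ℝ) :
    HasDerivAt (Aop g) (g x) x := by
  have h := intervalIntegral.integral_hasDerivAt_right
    (hg.intervalIntegrable 0 x) (hg.stronglyMeasurableAtFilter _ _) hg.continuousAt
  exact h.sub_const _

lemma Aop_continuous {g : ℝ → ℝ} (hg : Continuous g) : Continuous (Aop g) :=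
  continuous_iff_continuousAt.2 fun x => (Aop_hasDerivAt hg x).continuousAt

lemma Aop_periodic {g : ℝ → ℝ} (hg : Continuous g) (hper : Function.Periodic g 1)
    (h0 : ∫ t in (0:ℝ)..1, g t = 0) : Function.Periodic (Aop g) 1 := by
  intro x
  have hadd : (∫ t in (0:ℝ)..(x+1), g t) = (∫ t in (0:ℝ)..x, g t) + ∫ t in x..(x+1), g t :=
    (intervalIntegral.integral_add_adjacent_intervals (hg.intervalIntegrable _ _)
      (hg.intervalIntegrable _ _)).symm
  have hx : (∫ t in x..(x+1), g t) = ∫ t in (0:ℝ)..(0+1), g t :=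
    hper.intervalIntegral_add_eq x 0
  simp only [Aop, hadd, hx, zero_add, h0]
  ring

lemma Aop_mean {g : ℝ → ℝ} (hg : Continuous g) : ∫ t in (0:ℝ)..1, Aop g t = 0 := by
  have hc : Continuous fun x => ∫ t in (0:ℝ)..x, g t :=
    intervalIntegral.continuous_primitive (fun a b => hg.intervalIntegrable a b) 0
  simp only [Aop]
  rw [intervalIntegral.integral_sub (hc.intervalIntegrable _ _)
    (intervalIntegrable_const)]
  simp

lemma periodic_abs_le {f : ℝ → ℝ} (hper : Function.Periodic f 1) {M : ℝ}
    (h : ∀ x ∈ Icc (0:ℝ) 1, |f x| ≤ M) (x : ℝ) : |f x| ≤ M := by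
  have := hper.sub_int_mul_eq (f := f) (x := x) ⌊x⌋
  rw [mul_one] at this
  rw [← this]
  exact h _ ⟨Int.fract_nonneg x, (Int.fract_lt_one x).le⟩

lemma Aop_bound {g : ℝ → ℝ} (hg : Continuous g) (hper : Function.Periodic g 1)
    (h0 : ∫ t in (0:ℝ)..1, g t = 0) {B : ℝ} (hB : ∀ x, |g x| ≤ B) (x : ℝ) :
    |Aop g x| ≤ 2 * B := by
  refine periodic_abs_le (Aop_periodic hg hper h0) (fun y hy => ?_) x
  have h1 : ∀ z ∈ Icc (0:ℝ) 1, |∫ t in (0:ℝ)..z, g t| ≤ B := by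
    intro z hz
    have := intervalIntegral.norm_integral_le_of_norm_le_const
      (C := B) (f := g) (a := 0) (b := z) (fun t _ => by simpa using hB t)
    calc |∫ t in (0:ℝ)..z, g t| ≤ B * |z - 0| := by simpa [Real.norm_eq_abs] using this
    _ ≤ B * 1 := by
        have hB0 : 0 ≤ B := le_trans (abs_nonneg _) (hB 0)
        have : |z - 0| ≤ 1 := by rw [sub_zero, abs_of_nonneg hz.1]; exact hz.2
        nlinarith
    _ = B := mul_one B
  have hc : Continuous fun x => ∫ t in (0:ℝ)..x, g t :=
    intervalIntegral.continuous_primitive (fun a b => hg.intervalIntegrable a b) 0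
  have h2 : |∫ u in (0:ℝ)..1, ∫ t in (0:ℝ)..u, g t| ≤ B := by
    have := intervalIntegral.norm_integral_le_of_norm_le_const
      (C := B) (f := fun u => ∫ t in (0:ℝ)..u, g t) (a := 0) (b := 1)
      (fun u hu => by
        have hu' : u ∈ Icc (0:ℝ) 1 := by
          rcases hu with ⟨h1', h2'⟩
          constructor
          · simp at h1' ⊢; linarith [h1']
          · simp at h2' ⊢; linarith [h2']
        simpa [Real.norm_eq_abs] using h1 u hu')
    simpa [Real.norm_eq_abs] using this
  calc |Aop g y| ≤ |∫ t in (0:ℝ)..y, g t| + |∫ u in (0:ℝ)..1, ∫ t in (0:ℝ)..u, g t| :=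
        abs_sub _ _
  _ ≤ B + B := add_le_add (h1 y hy) h2
  _ = 2 * B := by ring

lemma support_deriv_subset_Icc {k : ℝ → ℝ} (hk : Continuous (deriv k))
    (hsupp : Function.support k ⊆ Icc (-1:ℝ) 1) :
    Function.support (deriv k) ⊆ Icc (-1:ℝ) 1 := by
  have hz : ∀ x, x ∉ Icc (-1:ℝ) 1 → k x = 0 := fun x hx =>
    Function.support_subset_iff'.mp hsupp x hx
  have hcl : IsClosed {x : ℝ | deriv k x = 0} := isClosed_eq hk continuous_const
  have hIio : Iio (-1:ℝ) ⊆ {x : ℝ | deriv k x = 0} := by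
    intro x hx
    have hev : k =ᶠ[nhds x] (fun _ => 0) := by
      filter_upwards [isOpen_Iio.mem_nhds hx] with y hy
      exact hz y (fun hy' => absurd hy'.1 (not_le.2 hy))
    simp [hev.deriv_eq]
  have hIoi : Ioi (1:ℝ) ⊆ {x : ℝ | deriv k x = 0} := by
    intro x hx
    have hev : k =ᶠ[nhds x] (fun _ => 0) := by
      filter_upwards [isOpen_Ioi.mem_nhds hx] with y hy
      exact hz y (fun hy' => absurd hy'.2 (not_le.2 hy))
    simp [hev.deriv_eq]
  have hIic : Iic (-1:ℝ) ⊆ {x : ℝ | deriv k x = 0} := by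
    rw [← closure_Iio]
    exact hcl.closure_subset_iff.2 hIio
  have hIci : Ici (1:ℝ) ⊆ {x : ℝ | deriv k x = 0} := by
    rw [← closure_Ioi]
    exact hcl.closure_subset_iff.2 hIoi
  intro x hx
  by_contra hxn
  have hx0 : deriv k x = 0 := by
    rcases lt_or_ge x (-1) with h | h
    · exact hIic (le_of_lt h)
    · rcases lt_or_ge 1 x with h' | h'
      · exact hIci (le_of_lt h')
      · exact absurd ⟨h, h'⟩ hxn
  exact hx hx0


lemma scaled_support {k : ℝ → ℝ} (h : ℝ → ℝ) (hsupp : Function.support k ⊆ Icc (-1:ℝ) 1)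
    {η : ℝ} (hη : 0 < η) :
    Function.support (fun ξ => k (ξ/η) * h ξ) ⊆ Ioc (-(2*η)) (2*η) := by
  intro ξ hξ
  have hk : k (ξ/η) ≠ 0 := fun h0 => hξ (by simp [h0])
  have hmem : ξ/η ∈ Icc (-1:ℝ) 1 := hsupp hk
  have h1 : ξ ≤ η := by
    have := hmem.2
    rwa [div_le_one hη] at this
  have h2 : -η ≤ ξ := by
    have := hmem.1
    rw [le_div_iff₀ hη] at this
    linarith
  constructor <;> [skip; linarith]
  linarith

lemma parts_one {k g : ℝ → ℝ} (hk : ContDiff ℝ 1 k)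
    (hsupp : Function.support k ⊆ Icc (-1:ℝ) 1) (hg : Continuous g)
    {ε η : ℝ} (hε : 0 < ε) (hη : 0 < η) :
    ∫ ξ : ℝ, k (ξ/η) * g (ξ/ε) = (-(ε/η)) * ∫ ξ : ℝ, deriv k (ξ/η) * (Aop g) (ξ/ε) := by
  obtain ⟨hkdiff, hk'c⟩ := contDiff_one_iff_deriv.mp hk
  have hηne : η ≠ 0 := ne_of_gt hη
  have hεne : ε ≠ 0 := ne_of_gt hε
  have hzero : ∀ x, x ∉ Icc (-1:ℝ) 1 → k x = 0 := Function.support_subset_iff'.mp hsupp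
  have hk2 : k 2 = 0 := hzero 2 (by norm_num)
  have hkm2 : k (-2) = 0 := hzero (-2) (by norm_num)
  have hAc : Continuous (Aop g) := Aop_continuous hg
  -- reduce to interval
  have e1 : ∫ ξ : ℝ, k (ξ/η) * g (ξ/ε) = ∫ ξ in (-(2*η))..(2*η), k (ξ/η) * g (ξ/ε) :=
    (intervalIntegral.integral_eq_integral_of_support_subset
      (scaled_support _ hsupp hη)).symm
  have e3 : ∫ ξ : ℝ, deriv k (ξ/η) * (Aop g) (ξ/ε)
      = ∫ ξ in (-(2*η))..(2*η), deriv k (ξ/η) * (Aop g) (ξ/ε) :=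
    (intervalIntegral.integral_eq_integral_of_support_subset
      (scaled_support _ (support_deriv_subset_Icc hk'c hsupp) hη)).symm
  -- integration by parts
  have hu : ∀ x ∈ uIcc (-(2*η)) (2*η),
      HasDerivAt (fun ξ => k (ξ/η)) (η⁻¹ * deriv k (x/η)) x := by
    intro x _
    have h1 : HasDerivAt (fun ξ : ℝ => ξ/η) η⁻¹ x := by
      simpa using (hasDerivAt_id x).div_const η
    have h2 : HasDerivAt k (deriv k (x/η)) (x/η) := (hkdiff (x/η)).hasDerivAt
    have := h2.comp x h1
    rw [mul_comm]; exact this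
  have hv : ∀ x ∈ uIcc (-(2*η)) (2*η),
      HasDerivAt (fun ξ => ε * Aop g (ξ/ε)) (g (x/ε)) x := by
    intro x _
    have h1 : HasDerivAt (fun ξ : ℝ => ξ/ε) ε⁻¹ x := by
      simpa using (hasDerivAt_id x).div_const ε
    have h2 := (Aop_hasDerivAt hg (x/ε)).comp x h1
    have h3 := h2.const_mul ε
    have : ε * (g (x/ε) * ε⁻¹) = g (x/ε) := by field_simp
    rwa [this] at h3
  have hu' : IntervalIntegrable (fun x => η⁻¹ * deriv k (x/η)) volume (-(2*η)) (2*η) :=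
    (continuous_const.mul (hk'c.comp (continuous_id.div_const η))).intervalIntegrable _ _
  have hv' : IntervalIntegrable (fun x => g (x/ε)) volume (-(2*η)) (2*η) :=
    (hg.comp (continuous_id.div_const ε)).intervalIntegrable _ _
  have key := intervalIntegral.integral_mul_deriv_eq_deriv_mul hu hv hu' hv'
  have hb1 : k ((2*η)/η) = 0 := by
    rw [show (2*η)/η = 2 by field_simp]; exact hk2
  have hb2 : k ((-(2*η))/η) = 0 := by
    rw [show (-(2*η))/η = -2 by field_simp]; exact hkm2
  rw [hb1, hb2] at key
  simp only [zero_mul, sub_zero, zero_sub] at key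
  have epw : ∀ x : ℝ, (η⁻¹ * deriv k (x/η)) * (ε * Aop g (x/ε))
      = (ε/η) * (deriv k (x/η) * Aop g (x/ε)) := by
    intro x; field_simp
  rw [e1, key, e3]
  rw [show (fun x => (η⁻¹ * deriv k (x/η)) * (ε * Aop g (x/ε)))
    = (fun x => (ε/η) * (deriv k (x/η) * Aop g (x/ε))) from funext epw]
  rw [intervalIntegral.integral_const_mul]
  ring

lemma parts_iter (n : ℕ) : ∀ (k g : ℝ → ℝ), ContDiff ℝ (n:ℕ∞) k →
    Function.support k ⊆ Icc (-1:ℝ) 1 → Continuous g → ∀ {ε η : ℝ}, 0 < ε → 0 < η →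
    ∫ ξ : ℝ, k (ξ/η) * g (ξ/ε)
      = (-(ε/η))^n * ∫ ξ : ℝ, iteratedDeriv n k (ξ/η) * (Aop^[n] g) (ξ/ε) := by
  induction n with
  | zero => intro k g _ _ _ ε η _ _; simp
  | succ n ih =>
    intro k g hk hsupp hg ε η hε hη
    have hk1 : ContDiff ℝ 1 k := hk.of_le (by exact_mod_cast Nat.one_le_iff_ne_zero.mpr (Nat.succ_ne_zero n))
    have hkd : ContDiff ℝ (n:ℕ∞) (deriv k) := by
      have := (contDiff_succ_iff_deriv (n := (n:ℕ∞))).mp (by exact_mod_cast hk)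
      exact_mod_cast this.2.2
    have hk'c : Continuous (deriv k) := (contDiff_one_iff_deriv.mp hk1).2
    have hsupp' := support_deriv_subset_Icc hk'c hsupp
    rw [parts_one hk1 hsupp hg hε hη,
        ih (deriv k) (Aop g) hkd hsupp' (Aop_continuous hg) hε hη,
        ← iteratedDeriv_succ']
    rw [show Aop^[n] (Aop g) = Aop^[n+1] g from (Function.iterate_succ_apply Aop n g).symm]
    ring

lemma support_iteratedDeriv_subset (n : ℕ) : ∀ (k : ℝ → ℝ), ContDiff ℝ (n:ℕ∞) k →
    Function.support k ⊆ Icc (-1:ℝ) 1 →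
    Function.support (iteratedDeriv n k) ⊆ Icc (-1:ℝ) 1 := by
  induction n with
  | zero => intro k _ hsupp; simpa using hsupp
  | succ n ih =>
    intro k hk hsupp
    have hk1 : ContDiff ℝ 1 k := hk.of_le (by exact_mod_cast Nat.one_le_iff_ne_zero.mpr (Nat.succ_ne_zero n))
    have hkd : ContDiff ℝ (n:ℕ∞) (deriv k) := by
      have := (contDiff_succ_iff_deriv (n := (n:ℕ∞))).mp (by exact_mod_cast hk)
      exact_mod_cast this.2.2
    have hk'c : Continuous (deriv k) := (contDiff_one_iff_deriv.mp hk1).2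
    rw [iteratedDeriv_succ']
    exact ih (deriv k) hkd (support_deriv_subset_Icc hk'c hsupp)


lemma AopIter_props (n : ℕ) : ∀ {g : ℝ → ℝ}, Continuous g → Function.Periodic g 1 →
    (∫ t in (0:ℝ)..1, g t = 0) → ∀ {B : ℝ}, (∀ x, |g x| ≤ B) →
    Continuous (Aop^[n] g) ∧ Function.Periodic (Aop^[n] g) 1 ∧
      (∫ t in (0:ℝ)..1, Aop^[n] g t = 0) ∧ ∀ x, |Aop^[n] g x| ≤ 2^n * B := by
  induction n with
  | zero => intro g hg hper h0 B hB; exact ⟨hg, hper, h0, fun x => by simpa using hB x⟩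
  | succ n ih =>
    intro g hg hper h0 B hB
    have h1 := ih (Aop_continuous hg) (Aop_periodic hg hper h0) (Aop_mean hg)
      (Aop_bound hg hper h0 hB)
    rw [show Aop^[n+1] g = Aop^[n] (Aop g) from Function.iterate_succ_apply Aop n g]
    refine ⟨h1.1, h1.2.1, h1.2.2.1, fun x => ?_⟩
    calc |Aop^[n] (Aop g) x| ≤ 2^n * (2*B) := h1.2.2.2 x
    _ = 2^(n+1) * B := by ring

lemma integrable_aux {k b : ℝ → ℝ} (hk : Continuous k)
    (hsupp : Function.support k ⊆ Icc (-1:ℝ) 1) (hb : Continuous b) {η : ℝ} (hη : 0 < η) :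
    Integrable (fun ξ => k (ξ/η) * b ξ) := by
  apply Continuous.integrable_of_hasCompactSupport ((hk.comp (continuous_id.div_const η)).mul hb)
  apply HasCompactSupport.intro (isCompact_Icc (a := -(2*η)) (b := 2*η))
  intro x hx
  by_contra hne
  exact hx (Ioc_subset_Icc_self (scaled_support b hsupp hη hne))

lemma oneD (q : ℕ) (K : ℝ → ℝ) (hK : ContDiff ℝ (q:ℕ∞) K)
    (hKsupp : Function.support K ⊆ Icc (-1:ℝ) 1)
    (hKint : ∫ x : ℝ, K x = 1) (g : ℝ → ℝ) (hg : Continuous g)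
    (hgper : Function.Periodic g 1) (B : ℝ)
    (hB : ∀ x, |g x - ∫ t in (0:ℝ)..1, g t| ≤ B)
    {ε η : ℝ} (hε : 0 < ε) (hη : 0 < η) :
    |(∫ t in (0:ℝ)..1, g t) - ∫ ξ : ℝ, η⁻¹ * K (ξ/η) * g (ξ/ε)|
      ≤ ((∫ x : ℝ, |iteratedDeriv q K x|) * (2^q * B)) * (ε/η)^q := by
  set m := ∫ t in (0:ℝ)..1, g t with hm
  set g0 : ℝ → ℝ := fun x => g x - m with hg0
  have hg0c : Continuous g0 := hg.sub continuous_const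
  have hg0per : Function.Periodic g0 1 := fun x => by simp [hg0, hgper x]
  have hg0mean : ∫ t in (0:ℝ)..1, g0 t = 0 := by
    rw [hg0]
    rw [intervalIntegral.integral_sub (hg.intervalIntegrable _ _) intervalIntegrable_const]
    simp [hm]
  have hB0 : 0 ≤ B := le_trans (abs_nonneg _) (hB 0)
  obtain ⟨hhc, _, _, hhB⟩ := AopIter_props q hg0c hg0per hg0mean hB
  set h : ℝ → ℝ := Aop^[q] g0 with hh
  have hKc : Continuous K := hK.continuous
  have hKqc : Continuous (iteratedDeriv q K) :=
    hK.continuous_iteratedDeriv q (by exact_mod_cast le_rfl)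
  have hKqsupp := support_iteratedDeriv_subset q K hK hKsupp
  -- split the integral
  have i1 : Integrable (fun ξ => K (ξ/η) * g0 (ξ/ε)) :=
    integrable_aux hKc hKsupp (hg0c.comp (continuous_id.div_const ε)) hη
  have i2 : Integrable (fun ξ => K (ξ/η) * 1) :=
    integrable_aux hKc hKsupp continuous_const hη
  have i2' : Integrable (fun ξ : ℝ => K (ξ/η)) := by simpa using i2
  have split : (fun ξ : ℝ => η⁻¹ * K (ξ/η) * g (ξ/ε))
      = fun ξ => η⁻¹ * (K (ξ/η) * g0 (ξ/ε)) + (η⁻¹ * m) * K (ξ/η) := by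
    funext ξ; simp only [hg0]; ring
  have heta : |η| = η := abs_of_pos hη
  have hKscaled : ∫ ξ : ℝ, K (ξ/η) = η := by
    rw [Measure.integral_comp_div K η, hKint, heta]; simp
  have e0 : ∫ ξ : ℝ, η⁻¹ * K (ξ/η) * g (ξ/ε)
      = η⁻¹ * (∫ ξ : ℝ, K (ξ/η) * g0 (ξ/ε)) + m := by
    rw [split, integral_add (i1.const_mul _) (i2'.const_mul _),
      integral_const_mul, integral_const_mul, hKscaled]
    field_simp
  have e1 := parts_iter q K g0 hK hKsupp hg0c hε hη
  -- the bound
  have hbd : |∫ ξ : ℝ, iteratedDeriv q K (ξ/η) * h (ξ/ε)|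
      ≤ (2^q * B) * (η * ∫ x : ℝ, |iteratedDeriv q K x|) := by
    have ia : Integrable (fun ξ => iteratedDeriv q K (ξ/η) * h (ξ/ε)) :=
      integrable_aux hKqc hKqsupp (hhc.comp (continuous_id.div_const ε)) hη
    have ib : Integrable (fun ξ => |iteratedDeriv q K (ξ/η)| * (2^q * B)) := by
      have := (integrable_aux hKqc.abs
        (fun x hx => hKqsupp (by simpa using hx)) (continuous_const (y := (2:ℝ)^q * B)) hη)
      simpa using this
    calc |∫ ξ : ℝ, iteratedDeriv q K (ξ/η) * h (ξ/ε)|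
        ≤ ∫ ξ : ℝ, |iteratedDeriv q K (ξ/η) * h (ξ/ε)| := by
          have := norm_integral_le_integral_norm (μ := volume)
            (fun ξ : ℝ => iteratedDeriv q K (ξ/η) * h (ξ/ε))
          simp only [Real.norm_eq_abs] at this
          exact this
    _ ≤ ∫ ξ : ℝ, |iteratedDeriv q K (ξ/η)| * (2^q * B) := by
          refine integral_mono ia.abs ib (fun ξ => ?_)
          rw [abs_mul]
          exact mul_le_mul_of_nonneg_left (hhB _) (abs_nonneg _)
    _ = (2^q * B) * (η * ∫ x : ℝ, |iteratedDeriv q K x|) := by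
          rw [integral_mul_const, Measure.integral_comp_div
            (fun x => |iteratedDeriv q K x|) η, heta]
          simp only [smul_eq_mul]
          ring
  rw [e0, e1]
  have habs : |m - (η⁻¹ * ((-(ε/η))^q * ∫ ξ : ℝ, iteratedDeriv q K (ξ/η) * h (ξ/ε)) + m)|
      = η⁻¹ * (ε/η)^q * |∫ ξ : ℝ, iteratedDeriv q K (ξ/η) * h (ξ/ε)| := by
    rw [show m - (η⁻¹ * ((-(ε/η))^q * ∫ ξ : ℝ, iteratedDeriv q K (ξ/η) * h (ξ/ε)) + m)
      = -(η⁻¹ * ((-(ε/η))^q * ∫ ξ : ℝ, iteratedDeriv q K (ξ/η) * h (ξ/ε))) by ring]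
    rw [abs_neg, abs_mul, abs_mul, abs_pow, abs_neg, abs_div,
      abs_of_pos hε, abs_of_pos hη, abs_of_pos (inv_pos.mpr hη)]
    ring
  rw [habs]
  have hpow : (0:ℝ) ≤ (ε/η)^q := pow_nonneg (le_of_lt (div_pos hε hη)) q
  calc η⁻¹ * (ε/η)^q * |∫ ξ : ℝ, iteratedDeriv q K (ξ/η) * h (ξ/ε)|
      ≤ η⁻¹ * (ε/η)^q * ((2^q * B) * (η * ∫ x : ℝ, |iteratedDeriv q K x|)) := by
        apply mul_le_mul_of_nonneg_left hbd
        positivity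
  _ = ((∫ x : ℝ, |iteratedDeriv q K x|) * (2^q * B)) * (ε/η)^q := by
        field_simp


/-- **High-order kernel averaging of a space-time periodic oscillatory function.**
For `K ∈ 𝕂^{p,q}` and `φ(y,s)` 1-periodic in each variable with all partial
derivatives up to order `q` continuous and bounded, the weighted average
`∬ K_η(ξ) K_τ(s) φ(ξ/ε, s/ε) dξ ds` approximates the mean value
`v̄ = ∫₀¹∫₀¹ φ` with error `C [(ε/η)^q + (ε/τ)^q]`. -/
theorem stmt_2 (p q : ℕ) (hp : 1 ≤ p) (hq : 1 ≤ q)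
    (K : ℝ → ℝ) (hK : ContDiff ℝ (q : ℕ∞) K)
    (hKsupp : Function.support K ⊆ Icc (-1 : ℝ) 1)
    (hKint : ∫ x : ℝ, K x = 1)
    (hKmom : ∀ j : ℕ, 1 ≤ j → j ≤ p → ∫ x : ℝ, K x * x ^ j = 0)
    (φ : ℝ → ℝ → ℝ)
    (hφ : ContDiff ℝ (q : ℕ∞) fun z : ℝ × ℝ => φ z.1 z.2)
    (hφbdd : ∀ i : ℕ, i ≤ q → ∃ M : ℝ, ∀ z : ℝ × ℝ,
      ‖iteratedFDeriv ℝ i (fun z : ℝ × ℝ => φ z.1 z.2) z‖ ≤ M)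
    (hper1 : ∀ y s : ℝ, φ (y + 1) s = φ y s)
    (hper2 : ∀ y s : ℝ, φ y (s + 1) = φ y s) :
    ∃ C > (0 : ℝ), ∀ ε η τ : ℝ, 0 < ε → 0 < η → 0 < τ →
      |(∫ y in (0 : ℝ)..1, ∫ s in (0 : ℝ)..1, φ y s) -
          ∫ ξ : ℝ, ∫ s : ℝ, (η⁻¹ * K (ξ / η)) * (τ⁻¹ * K (s / τ)) * φ (ξ / ε) (s / ε)| ≤
        C * ((ε / η) ^ q + (ε / τ) ^ q) := by
  obtain ⟨M0, hM0⟩ := hφbdd 0 (Nat.zero_le q)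
  have hφc : Continuous fun z : ℝ × ℝ => φ z.1 z.2 := hφ.continuous
  have hφabs : ∀ y s : ℝ, |φ y s| ≤ M0 := by
    intro y s
    have := hM0 (y, s)
    rwa [norm_iteratedFDeriv_zero, Real.norm_eq_abs] at this
  have hM0nn : 0 ≤ M0 := le_trans (abs_nonneg _) (hφabs 0 0)
  set ψ : ℝ → ℝ := fun y => ∫ s in (0:ℝ)..1, φ y s with hψdef
  have hψc : Continuous ψ :=
    intervalIntegral.continuous_parametric_intervalIntegral_of_continuous' hφc 0 1
  have hψper : Function.Periodic ψ 1 := by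
    intro y
    exact intervalIntegral.integral_congr (fun s _ => hper1 y s)
  have habs_int : ∀ (g : ℝ → ℝ), (∀ x, |g x| ≤ M0) → |∫ t in (0:ℝ)..1, g t| ≤ M0 := by
    intro g hg
    have := intervalIntegral.norm_integral_le_of_norm_le_const
      (C := M0) (f := g) (a := 0) (b := 1) (fun t _ => by simpa [Real.norm_eq_abs] using hg t)
    simpa [Real.norm_eq_abs] using this
  have hψabs : ∀ y, |ψ y| ≤ M0 := fun y => habs_int _ (hφabs y)
  set I : ℝ := ∫ x : ℝ, |iteratedDeriv q K x| with hI
  set J : ℝ := ∫ x : ℝ, |K x| with hJ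
  have hInn : 0 ≤ I := integral_nonneg (fun x => abs_nonneg _)
  have hJnn : 0 ≤ J := integral_nonneg (fun x => abs_nonneg _)
  set C1 : ℝ := I * (2^q * (2*M0)) with hC1def
  have hC1nn : 0 ≤ C1 := by positivity
  refine ⟨C1 + J * C1 + 1, by positivity, ?_⟩
  intro ε η τ hε hη hτ
  have hKc : Continuous K := hK.continuous
  -- outer 1D estimate
  have hψbound : ∀ x, |ψ x - ∫ t in (0:ℝ)..1, ψ t| ≤ 2*M0 := by
    intro x
    calc |ψ x - ∫ t in (0:ℝ)..1, ψ t| ≤ |ψ x| + |∫ t in (0:ℝ)..1, ψ t| := abs_sub _ _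
    _ ≤ M0 + M0 := add_le_add (hψabs x) (habs_int _ hψabs)
    _ = 2*M0 := by ring
  have h_outer := oneD q K hK hKsupp hKint ψ hψc hψper (2*M0) hψbound hε hη
  -- inner 1D estimate, uniform in ξ
  have h_inner : ∀ ξ : ℝ, |ψ (ξ/ε) - ∫ s : ℝ, τ⁻¹ * K (s/τ) * φ (ξ/ε) (s/ε)|
      ≤ C1 * (ε/τ)^q := by
    intro ξ
    have hgc : Continuous (φ (ξ/ε)) := hφc.comp (Continuous.prodMk_right (ξ/ε))
    have hgper : Function.Periodic (φ (ξ/ε)) 1 := fun s => hper2 _ s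
    have hgB : ∀ x, |φ (ξ/ε) x - ∫ t in (0:ℝ)..1, φ (ξ/ε) t| ≤ 2*M0 := by
      intro x
      calc _ ≤ |φ (ξ/ε) x| + |∫ t in (0:ℝ)..1, φ (ξ/ε) t| := abs_sub _ _
      _ ≤ M0 + M0 := add_le_add (hφabs _ x) (habs_int _ (hφabs _))
      _ = 2*M0 := by ring
    exact oneD q K hK hKsupp hKint (φ (ξ/ε)) hgc hgper (2*M0) hgB hε hτ
  -- F and its continuity
  set F : ℝ → ℝ := fun ξ => ∫ s : ℝ, τ⁻¹ * K (s/τ) * φ (ξ/ε) (s/ε) with hFdef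
  have hFint : ∀ ξ, F ξ = ∫ s in (-(2*τ))..(2*τ), τ⁻¹ * K (s/τ) * φ (ξ/ε) (s/ε) := by
    intro ξ
    have e := intervalIntegral.integral_eq_integral_of_support_subset (μ := volume)
      (scaled_support (fun s => τ⁻¹ * φ (ξ/ε) (s/ε)) hKsupp hτ)
    calc F ξ = ∫ s : ℝ, K (s/τ) * (τ⁻¹ * φ (ξ/ε) (s/ε)) := by
          simp only [hFdef]; congr 1; funext s; ring
    _ = ∫ s in (-(2*τ))..(2*τ), K (s/τ) * (τ⁻¹ * φ (ξ/ε) (s/ε)) := e.symm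
    _ = ∫ s in (-(2*τ))..(2*τ), τ⁻¹ * K (s/τ) * φ (ξ/ε) (s/ε) :=
          intervalIntegral.integral_congr (fun s _ => by ring)
  have hFc : Continuous F := by
    rw [show F = fun ξ => ∫ s in (-(2*τ))..(2*τ), τ⁻¹ * K (s/τ) * φ (ξ/ε) (s/ε)
      from funext hFint]
    apply intervalIntegral.continuous_parametric_intervalIntegral_of_continuous'
    exact (continuous_const.mul (hKc.comp (continuous_snd.div_const τ))).mul
      (hφc.comp ((continuous_fst.div_const ε).prodMk (continuous_snd.div_const ε)))
  -- reduce double integral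
  have e_dbl : (∫ ξ : ℝ, ∫ s : ℝ, (η⁻¹ * K (ξ / η)) * (τ⁻¹ * K (s / τ)) * φ (ξ / ε) (s / ε))
      = ∫ ξ : ℝ, η⁻¹ * K (ξ/η) * F ξ := by
    congr 1
    funext ξ
    rw [hFdef]
    simp only [mul_assoc, integral_const_mul]
  -- integrability
  have iψ : Integrable (fun ξ : ℝ => η⁻¹ * K (ξ/η) * ψ (ξ/ε)) := by
    have : (fun ξ : ℝ => η⁻¹ * K (ξ/η) * ψ (ξ/ε)) = fun ξ => η⁻¹ * (K (ξ/η) * ψ (ξ/ε)) := by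
      funext ξ; ring
    rw [this]
    exact (integrable_aux hKc hKsupp (hψc.comp (continuous_id.div_const ε)) hη).const_mul _
  have iF : Integrable (fun ξ : ℝ => η⁻¹ * K (ξ/η) * F ξ) := by
    have : (fun ξ : ℝ => η⁻¹ * K (ξ/η) * F ξ) = fun ξ => η⁻¹ * (K (ξ/η) * F ξ) := by
      funext ξ; ring
    rw [this]
    exact (integrable_aux hKc hKsupp hFc hη).const_mul _
  -- second term bound
  have h_second : |(∫ ξ : ℝ, η⁻¹ * K (ξ/η) * ψ (ξ/ε)) - ∫ ξ : ℝ, η⁻¹ * K (ξ/η) * F ξ|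
      ≤ J * (C1 * (ε/τ)^q) := by
    rw [← integral_sub iψ iF]
    have hrhs : Integrable (fun ξ : ℝ => |K (ξ/η)| * (η⁻¹ * (C1 * (ε/τ)^q))) :=
      integrable_aux hKc.abs (fun x hx => hKsupp (by simpa using hx)) continuous_const hη
    calc |∫ ξ : ℝ, (η⁻¹ * K (ξ/η) * ψ (ξ/ε) - η⁻¹ * K (ξ/η) * F ξ)|
        ≤ ∫ ξ : ℝ, |η⁻¹ * K (ξ/η) * ψ (ξ/ε) - η⁻¹ * K (ξ/η) * F ξ| := by
          have := norm_integral_le_integral_norm (μ := volume)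
            (fun ξ : ℝ => η⁻¹ * K (ξ/η) * ψ (ξ/ε) - η⁻¹ * K (ξ/η) * F ξ)
          simpa [Real.norm_eq_abs] using this
    _ ≤ ∫ ξ : ℝ, |K (ξ/η)| * (η⁻¹ * (C1 * (ε/τ)^q)) := by
          refine integral_mono (iψ.sub iF).abs hrhs (fun ξ => ?_)
          have : η⁻¹ * K (ξ/η) * ψ (ξ/ε) - η⁻¹ * K (ξ/η) * F ξ
              = (η⁻¹ * K (ξ/η)) * (ψ (ξ/ε) - F ξ) := by ring
          rw [this, abs_mul, abs_mul, abs_of_pos (inv_pos.mpr hη)]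
          rw [show |K (ξ/η)| * (η⁻¹ * (C1 * (ε/τ)^q))
            = η⁻¹ * |K (ξ/η)| * (C1 * (ε/τ)^q) by ring]
          exact mul_le_mul_of_nonneg_left (h_inner ξ) (by positivity)
    _ = J * (C1 * (ε/τ)^q) := by
          rw [integral_mul_const, Measure.integral_comp_div (fun x => |K x|) η,
            abs_of_pos hη, smul_eq_mul, ← hJ]
          field_simp
  -- combine
  have tri : |(∫ y in (0 : ℝ)..1, ψ y) - ∫ ξ : ℝ, η⁻¹ * K (ξ/η) * F ξ|
      ≤ C1 * (ε/η)^q + J * (C1 * (ε/τ)^q) := by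
    calc |(∫ y in (0 : ℝ)..1, ψ y) - ∫ ξ : ℝ, η⁻¹ * K (ξ/η) * F ξ|
        ≤ |(∫ y in (0 : ℝ)..1, ψ y) - ∫ ξ : ℝ, η⁻¹ * K (ξ/η) * ψ (ξ/ε)|
          + |(∫ ξ : ℝ, η⁻¹ * K (ξ/η) * ψ (ξ/ε)) - ∫ ξ : ℝ, η⁻¹ * K (ξ/η) * F ξ| :=
          abs_sub_le _ _ _
    _ ≤ C1 * (ε/η)^q + J * (C1 * (ε/τ)^q) := add_le_add h_outer h_second
  rw [e_dbl]
  have hpη : (0:ℝ) ≤ (ε/η)^q := by positivity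
  have hpτ : (0:ℝ) ≤ (ε/τ)^q := by positivity
  calc |(∫ y in (0 : ℝ)..1, ψ y) - ∫ ξ : ℝ, η⁻¹ * K (ξ/η) * F ξ|
      ≤ C1 * (ε/η)^q + J * (C1 * (ε/τ)^q) := tri
  _ ≤ (C1 + J * C1 + 1) * ((ε/η)^q + (ε/τ)^q) := by nlinarith [mul_nonneg hJnn hC1nn]
end

section
/- Let ε > 0. Let Q ∈ L¹(ℝ) be such that its Fourier transform 𝔉Q(k) := ∫_ℝ Q(x) e^{−ikx} dx vanishes for all |k| ≥ π/ε. Let κ ∈ ℝ and let ψ : ℝ → ℂ be 1-periodic and continuously differentiable. Define b(κ;ψ) := ∫_{−1/2}^{1/2} conj(ψ(x)) dx and, for k ∈ ℝ, q̂(k) := ∫_ℝ Q(x) conj(ψ(x/ε)) e^{−ikx} dx. Then for every k with |k| ≤ π/ε and with ψ the function above (playing the role of ψ_m(·, εk)): q̂(k) = 𝔉Q(k) · b(κ;ψ), i.e. q̂(k) = 𝔉Q(k) ∫_{−1/2}^{1/2} conj(ψ(x)) dx. -/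
open MeasureTheory

open Complex AddCircle intervalIntegral
open scoped ENNReal

private lemma fc_eq (f : ℝ → ℂ) (hper : Function.Periodic f 1) (n : ℤ) :
    fourierCoeff (Function.Periodic.lift hper) n
      = ∫ x in (0:ℝ)..1, Complex.exp (-(2*Real.pi*I*n*x)) * f x := by
  haveI : Fact (0 < (1:ℝ)) := ⟨one_pos⟩
  rw [fourierCoeff_eq_intervalIntegral _ n 0]
  simp only [zero_add, one_smul, div_one]
  refine intervalIntegral.integral_congr fun x hx => ?_
  rw [Function.Periodic.lift_coe, fourier_coe_apply, smul_eq_mul]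
  push_cast
  ring_nf

private lemma char_hasDerivAt (α : ℂ) (x : ℝ) :
    HasDerivAt (fun y : ℝ => Complex.exp (-(α * y))) (-α * Complex.exp (-(α * x))) x := by
  have h1 : HasDerivAt (fun y : ℝ => -(α * (y:ℂ))) (-α) x := by
    have h := ((Complex.ofRealCLM.hasDerivAt (x := x)).const_mul α).neg
    simp at h
    exact h
  simpa [mul_comm] using h1.cexp

private lemma parts (ψ : ℝ → ℂ) (hψ : ContDiff ℝ 1 ψ) (hper : Function.Periodic ψ 1)
    {n : ℤ} (hn : n ≠ 0) :
    (∫ x in (0:ℝ)..1, Complex.exp (-(2*Real.pi*I*n*x)) * ψ x)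
      = (∫ x in (0:ℝ)..1, Complex.exp (-(2*Real.pi*I*n*x)) * deriv ψ x) / (2*Real.pi*I*n) := by
  set α : ℂ := 2*Real.pi*I*n with hα
  have hα0 : α ≠ 0 := by
    simp only [hα]
    apply mul_ne_zero
    apply mul_ne_zero
    · simpa using Real.pi_ne_zero
    · exact Complex.I_ne_zero
    · exact_mod_cast hn
  have hu : ∀ x ∈ Set.uIcc (0:ℝ) 1, HasDerivAt ψ (deriv ψ x) x := fun x _ =>
    (hψ.differentiable one_ne_zero).differentiableAt.hasDerivAt
  have hv : ∀ x ∈ Set.uIcc (0:ℝ) 1,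
      HasDerivAt (fun y : ℝ => Complex.exp (-(α * y)) / (-α)) (Complex.exp (-(α * x))) x := by
    intro x _
    have := (char_hasDerivAt α x).div_const (-α)
    have h2 : -α * Complex.exp (-(α * x)) / (-α) = Complex.exp (-(α * x)) := by
      field_simp
    rwa [h2] at this
  have hu' : IntervalIntegrable (deriv ψ) volume 0 1 :=
    (hψ.continuous_deriv le_rfl).intervalIntegrable 0 1
  have hv' : IntervalIntegrable (fun x : ℝ => Complex.exp (-(α * x))) volume 0 1 := by
    apply Continuous.intervalIntegrable
    exact Complex.continuous_exp.comp (by continuity)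
  have key := intervalIntegral.integral_mul_deriv_eq_deriv_mul hu hv hu' hv'
  have hψ10 : ψ 1 = ψ 0 := by simpa using hper 0
  have hexp1 : Complex.exp (-(α * (1:ℝ))) = 1 := by
    rw [hα]
    push_cast
    rw [show -(2*(Real.pi:ℂ)*I*n*1) = (-n) * (2*Real.pi*I) by ring]
    exact_mod_cast Complex.exp_int_mul_two_pi_mul_I (-n)
  have hexp0 : Complex.exp (-(α * (0:ℝ))) = 1 := by simp
  rw [hψ10, hexp1, hexp0] at key
  have key2 : (∫ x in (0:ℝ)..1, ψ x * Complex.exp (-(α * x)))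
      = - ∫ x in (0:ℝ)..1, deriv ψ x * (Complex.exp (-(α * x)) / (-α)) := by
    rw [key]; ring
  calc (∫ x in (0:ℝ)..1, Complex.exp (-(α*x)) * ψ x)
      = ∫ x in (0:ℝ)..1, ψ x * Complex.exp (-(α * x)) := by
        refine intervalIntegral.integral_congr fun x _ => by ring
    _ = - ∫ x in (0:ℝ)..1, deriv ψ x * (Complex.exp (-(α * x)) / (-α)) := key2
    _ = (∫ x in (0:ℝ)..1, Complex.exp (-(α*x)) * deriv ψ x) / α := by
        rw [← intervalIntegral.integral_neg, ← intervalIntegral.integral_div]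
        refine intervalIntegral.integral_congr fun x _ => ?_
        field_simp

private lemma bessel (T : ℝ) [hT : Fact (0 < T)] (g : C(AddCircle T, ℂ)) :
    Summable fun n : ℤ => ‖fourierCoeff (⇑g) n‖^2 := by
  have hm := lp.memℓp (fourierBasis.repr (ContinuousMap.toLp (E := ℂ) 2 haarAddCircle ℂ g))
  rw [memℓp_gen_iff (by norm_num)] at hm
  have he : ∀ n : ℤ, ‖(fourierBasis.repr (ContinuousMap.toLp (E := ℂ) 2 haarAddCircle ℂ g)) n‖
      ^ (2 : ℝ≥0∞).toReal = ‖fourierCoeff (⇑g) n‖ ^ 2 := by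
    intro n
    rw [fourierBasis_repr, fourierCoeff_toLp]
    rw [ENNReal.toReal_ofNat, show ((2:ℝ)) = ((2:ℕ):ℝ) by norm_num, Real.rpow_natCast]
  exact (summable_congr he).mp hm

private lemma summable_norm_c (c d : ℤ → ℂ)
    (hcd : ∀ n : ℤ, n ≠ 0 → c n = d n / (2*Real.pi*I*n))
    (hd2 : Summable fun n : ℤ => ‖d n‖^2) :
    Summable fun n : ℤ => ‖c n‖ := by
  set bound : ℤ → ℝ := fun n => ‖d n‖^2/2 + (1/(2*Real.pi))^2 * (1/(n:ℝ)^2) with hbound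
  have hboundsum : Summable bound :=
    (hd2.div_const 2).add (((Real.summable_one_div_int_pow (p := 2)).mpr one_lt_two).mul_left _)
  have hif : Summable (fun n : ℤ => if n = 0 then ‖c 0‖ else 0) := by
    apply summable_of_ne_finset_zero (s := {0})
    intro n hn
    simp only [Finset.mem_singleton] at hn
    simp [hn]
  have hble : ∀ n : ℤ, ‖c n‖ ≤ bound n + (if n = 0 then ‖c 0‖ else 0) := by
    intro n
    rcases eq_or_ne n 0 with rfl | hn
    · have h0 : (0:ℝ) ≤ bound 0 := by positivity
      simp only [if_pos]
      linarith
    · simp only [if_neg hn, add_zero]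
      rw [hcd n hn]
      have hnorm : ‖(2*Real.pi*I*n : ℂ)‖ = 2*Real.pi*|(n:ℝ)| := by
        simp [norm_mul, abs_of_pos Real.pi_pos]
      rw [norm_div, hnorm]
      have hn1 : (1:ℝ) ≤ |(n:ℝ)| := by
        rw [← Int.cast_abs]
        exact_mod_cast Int.one_le_abs hn
      have hsq : |(n:ℝ)|^2 = (n:ℝ)^2 := sq_abs _
      have hpi : (0:ℝ) < Real.pi := Real.pi_pos
      have hd0 : (0:ℝ) ≤ ‖d n‖ := norm_nonneg _
      have key : ‖d n‖ / (2*Real.pi*|(n:ℝ)|) ≤ ‖d n‖^2/2 + (1/(2*Real.pi*|(n:ℝ)|))^2 / 2 := by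
        rw [div_eq_mul_inv, ← one_div]
        nlinarith [sq_nonneg (‖d n‖ - 1/(2*Real.pi*|(n:ℝ)|)), sq_nonneg (1/(2*Real.pi*|(n:ℝ)|))]
      refine key.trans ?_
      have heq : (1/(2*Real.pi*|(n:ℝ)|))^2 = (1/(2*Real.pi))^2 * (1/(n:ℝ)^2) := by
        rw [div_pow, div_pow, one_pow, div_mul_div_comm, one_mul, ← mul_pow,
          mul_pow (2*Real.pi), hsq]
        ring
      rw [heq]
      have hnn : (0:ℝ) ≤ (1/(2*Real.pi))^2 * (1/(n:ℝ)^2) := by positivity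
      simp only [hbound]
      linarith
  exact Summable.of_nonneg_of_le (fun n => norm_nonneg _) hble (hboundsum.add hif)

/-- **Bloch coefficients of band-limited functions.**
If `Q ∈ L¹(ℝ)` has Fourier transform `𝔉Q(k) = ∫ Q(x) e^{-ikx} dx` vanishing for
`|k| ≥ π/ε`, and `ψ` is a 1-periodic `C¹` function (the Bloch-wave profile), then
for `|k| ≤ π/ε` the Bloch coefficient
`q̂(k) = ∫ Q(x) conj(ψ(x/ε)) e^{-ikx} dx` factorizes as
`q̂(k) = 𝔉Q(k) · ∫_{-1/2}^{1/2} conj(ψ(x)) dx`. -/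
theorem stmt_5 (ε : ℝ) (hε : 0 < ε)
    (Q : ℝ → ℂ) (hQ : Integrable Q)
    (hband : ∀ k : ℝ, Real.pi / ε ≤ |k| →
      (∫ x : ℝ, Q x * Complex.exp (-(Complex.I * k * x))) = 0)
    (κ : ℝ)
    (ψ : ℝ → ℂ) (hψper : ∀ x : ℝ, ψ (x + 1) = ψ x) (hψ : ContDiff ℝ 1 ψ)
    (k : ℝ) (hk : |k| ≤ Real.pi / ε) :
    ∫ x : ℝ, Q x * starRingEnd ℂ (ψ (x / ε)) * Complex.exp (-(Complex.I * k * x)) =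
      (∫ x : ℝ, Q x * Complex.exp (-(Complex.I * k * x))) *
        ∫ x in (-(1 : ℝ) / 2)..(1 / 2), starRingEnd ℂ (ψ x) := by
  haveI : Fact (0 < (1:ℝ)) := ⟨one_pos⟩
  have hεne : (ε:ℂ) ≠ 0 := by exact_mod_cast hε.ne'
  have hper : Function.Periodic ψ 1 := hψper
  have hdper : Function.Periodic (deriv ψ) 1 := by
    intro x
    have h1 : deriv (fun y : ℝ => ψ (y + 1)) x = deriv ψ (x + 1) := deriv_comp_add_const ψ 1 x
    rw [funext hψper] at h1
    exact h1.symm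
  set F : C(AddCircle (1:ℝ), ℂ) := ⟨hper.lift, continuous_coinduced_dom.mpr hψ.continuous⟩
    with hFdef
  set G : C(AddCircle (1:ℝ), ℂ) :=
    ⟨hdper.lift, continuous_coinduced_dom.mpr (hψ.continuous_deriv le_rfl)⟩ with hGdef
  set c : ℤ → ℂ := fun n => ∫ x in (0:ℝ)..1, Complex.exp (-(2*Real.pi*I*n*x)) * ψ x with hcdef
  set d : ℤ → ℂ := fun n => ∫ x in (0:ℝ)..1, Complex.exp (-(2*Real.pi*I*n*x)) * deriv ψ x
    with hddef
  have hFc : ∀ n, fourierCoeff (⇑F) n = c n := fun n => fc_eq ψ hper n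
  have hGd : ∀ n, fourierCoeff (⇑G) n = d n := fun n => fc_eq (deriv ψ) hdper n
  have hd2 : Summable fun n : ℤ => ‖d n‖^2 := by
    have := bessel 1 G
    simpa only [hGd] using this
  have hcd : ∀ n : ℤ, n ≠ 0 → c n = d n / (2*Real.pi*I*n) := fun n hn => parts ψ hψ hper hn
  have hcs : Summable fun n : ℤ => ‖c n‖ := summable_norm_c c d hcd hd2
  have hFsum : Summable (fourierCoeff (⇑F)) := by
    apply Summable.of_norm
    simpa only [hFc] using hcs
  -- pointwise Fourier expansion
  have hpt : ∀ y : ℝ, HasSum (fun n : ℤ => c n * Complex.exp (2*Real.pi*I*n*y)) (ψ y) := by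
    intro y
    have h := has_pointwise_sum_fourier_series_of_summable hFsum ((y : ℝ) : AddCircle (1:ℝ))
    have hFy : F ((y : ℝ) : AddCircle (1:ℝ)) = ψ y := Function.Periodic.lift_coe hper y
    rw [hFy] at h
    refine h.congr_fun fun n => ?_
    rw [hFc, fourier_coe_apply, smul_eq_mul]
    push_cast
    ring_nf
  set k' : ℤ → ℝ := fun n => k + 2*Real.pi*n/ε with hk'def
  set T : ℤ → ℝ → ℂ :=
    fun n x => (starRingEnd ℂ) (c n) * (Q x * Complex.exp (-(Complex.I * (k' n) * x)))
    with hTdef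
  have hptx : ∀ x : ℝ,
      HasSum (fun n : ℤ => T n x)
        (Q x * (starRingEnd ℂ) (ψ (x/ε)) * Complex.exp (-(Complex.I * k * x))) := by
    intro x
    have h1 := (hpt (x/ε)).star
    have h2 := h1.mul_left (Q x * Complex.exp (-(Complex.I * k * x)))
    have h3 : (Q x * Complex.exp (-(Complex.I * k * x))) * star (ψ (x/ε))
        = Q x * (starRingEnd ℂ) (ψ (x/ε)) * Complex.exp (-(Complex.I * k * x)) := by
      rw [Complex.star_def]; ring
    rw [h3] at h2
    refine h2.congr_fun fun n => ?_
    have hcexp : star (Complex.exp (2*Real.pi*I*n*((x/ε : ℝ):ℂ)))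
        = Complex.exp (-(2*Real.pi*I*n*((x/ε : ℝ):ℂ))) := by
      rw [Complex.star_def, ← Complex.exp_conj]
      congr 1
      simp only [map_mul, map_neg, map_ofNat, Complex.conj_ofReal, Complex.conj_I, map_intCast]
      push_cast
      ring
    have hsplit : (-(Complex.I * ((k' n : ℝ):ℂ) * (x:ℂ)))
        = -(Complex.I*k*x) + -(2*Real.pi*I*n*((x/ε : ℝ):ℂ)) := by
      simp only [hk'def]
      push_cast
      field_simp
      ring
    show T n x = Q x * Complex.exp (-(Complex.I * k * x)) *
      star (c n * Complex.exp (2*Real.pi*I*n*((x/ε : ℝ):ℂ)))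
    rw [star_mul', hcexp, hTdef]
    simp only
    rw [hsplit, Complex.exp_add, Complex.star_def]
    ring
  -- integrability
  have hnorme : ∀ (m x : ℝ), ‖Complex.exp (-(Complex.I * (m:ℂ) * (x:ℂ)))‖ = 1 := by
    intro m x
    rw [Complex.norm_exp]
    simp
  have hTint : ∀ n, Integrable (T n) := by
    intro n
    apply Integrable.const_mul
    have hm : AEStronglyMeasurable
        (fun x : ℝ => Complex.exp (-(Complex.I * ((k' n : ℝ):ℂ) * (x:ℂ)))) volume := by
      apply Continuous.aestronglyMeasurable
      exact Complex.continuous_exp.comp (by continuity)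
    have := hQ.bdd_mul (c := 1) hm (Filter.Eventually.of_forall fun x => le_of_eq (hnorme (k' n) x))
    refine this.congr (Filter.Eventually.of_forall fun x => ?_)
    ring
  have hTnorm : Summable fun n => ∫ x : ℝ, ‖T n x‖ := by
    have he : ∀ n, (∫ x : ℝ, ‖T n x‖) = ‖c n‖ * ∫ x : ℝ, ‖Q x‖ := by
      intro n
      rw [← MeasureTheory.integral_const_mul]
      refine integral_congr_ae (Filter.Eventually.of_forall fun x => ?_)
      simp only [hTdef, norm_mul, hnorme, mul_one, RCLike.norm_conj]
    rw [summable_congr he]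
    exact hcs.mul_right _
  have hswap := MeasureTheory.integral_tsum_of_summable_integral_norm hTint hTnorm
  have hLHS : (∫ x : ℝ, Q x * (starRingEnd ℂ) (ψ (x/ε)) * Complex.exp (-(Complex.I * k * x)))
      = ∑' n : ℤ, ∫ x : ℝ, T n x := by
    rw [hswap]
    exact integral_congr_ae (Filter.Eventually.of_forall fun x => ((hptx x).tsum_eq).symm)
  rw [hLHS]
  have hterm : ∀ n, (∫ x : ℝ, T n x)
      = (starRingEnd ℂ) (c n) * ∫ x : ℝ, Q x * Complex.exp (-(Complex.I * (k' n : ℝ) * x)) := by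
    intro n
    exact MeasureTheory.integral_const_mul _ _
  have hzero : ∀ n : ℤ, n ≠ 0 → (∫ x : ℝ, T n x) = 0 := by
    intro n hn
    rw [hterm, hband (k' n), mul_zero]
    have hn1 : (1:ℝ) ≤ |(n:ℝ)| := by
      rw [← Int.cast_abs]; exact_mod_cast Int.one_le_abs hn
    have hpi : (0:ℝ) < Real.pi := Real.pi_pos
    have habs : |2*Real.pi*(n:ℝ)/ε| = 2*Real.pi*|(n:ℝ)|/ε := by
      rw [abs_div, abs_of_pos hε, abs_mul, abs_of_pos (by positivity : (0:ℝ) < 2*Real.pi)]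
    have htri : |2*Real.pi*(n:ℝ)/ε| - |k| ≤ |k + 2*Real.pi*(n:ℝ)/ε| := by
      have h := abs_sub_abs_le_abs_sub (2*Real.pi*(n:ℝ)/ε) (-k)
      rw [sub_neg_eq_add, abs_neg, add_comm] at h
      exact h
    have hge : 2*Real.pi/ε ≤ 2*Real.pi*|(n:ℝ)|/ε := by
      apply (div_le_div_iff_of_pos_right hε).mpr
      nlinarith
    have : Real.pi / ε ≤ |k + 2*Real.pi*(n:ℝ)/ε| := by
      have h2 : 2*Real.pi/ε - Real.pi/ε = Real.pi/ε := by ring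
      rw [habs] at htri
      linarith
    simpa only [hk'def] using this
  rw [tsum_eq_single 0 hzero, hterm]
  have hk0 : k' 0 = k := by simp [hk'def]
  rw [hk0]
  have hc0 : c 0 = ∫ x in (-(1:ℝ)/2)..(1/2), ψ x := by
    have h1 : c 0 = ∫ x in (0:ℝ)..1, ψ x := by
      simp only [hcdef, Int.cast_zero, mul_zero, zero_mul, neg_zero, Complex.exp_zero, one_mul]
    have h2 := hper.intervalIntegral_add_eq 0 (-(1:ℝ)/2)
    rw [zero_add, show (-(1:ℝ)/2 + 1) = 1/2 by norm_num] at h2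
    rw [h1, h2]
  have hconjswap : (∫ x in (-(1:ℝ)/2)..(1/2), (starRingEnd ℂ) (ψ x))
      = (starRingEnd ℂ) (∫ x in (-(1:ℝ)/2)..(1/2), ψ x) := by
    rw [intervalIntegral.integral_of_le (by norm_num), intervalIntegral.integral_of_le (by norm_num),
      integral_conj]
  rw [hconjswap, ← hc0]
  ring
end

section
/- Let p, q ≥ 1 be integers and K ∈ 𝕂^{p,q}. Let ω : ℝ → ℝ be p times continuously differentiable with ω(0) = 0, and let ε, η > 0. Define s(k) := ∫_ℝ K_η(t) cos( ω(k) t / ε ) dt. Then s is p times differentiable at k = 0, s(0) = 1, and s^{(r)}(0) = 0 for every r with 1 ≤ r ≤ p. -/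
open MeasureTheory

section Aux

private lemma my_hcs_smul {R : Type*} [Zero R] [SMulZeroClass R ℂ] {f : ℝ → ℂ}
    (h : HasCompactSupport f) (g : ℝ → R) :
    HasCompactSupport fun x => g x • f x :=
  HasCompactSupport.intro h fun x hx => by
    rw [image_eq_zero_of_notMem_tsupport hx, smul_zero]

private lemma my_iteratedDeriv_add {n : ℕ} {f g : ℝ → ℝ} (hf : ContDiff ℝ n f)
    (hg : ContDiff ℝ n g) (x : ℝ) :
    iteratedDeriv n (fun y => f y + g y) x = iteratedDeriv n f x + iteratedDeriv n g x := by
  have h := iteratedFDeriv_add_apply (𝕜 := ℝ) hf.contDiffAt hg.contDiffAt (x := x)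
  simp only [iteratedDeriv_eq_iteratedFDeriv]
  have : (fun y => f y + g y) = f + g := rfl
  rw [this, h]
  rfl

/-- If all derivatives of `f` up to order `n` vanish at `a`, then all derivatives of
`f * u` up to order `n` vanish at `a`. -/
private lemma my_mul_vanish : ∀ (n : ℕ) (a : ℝ) (f u : ℝ → ℝ), ContDiff ℝ n f → ContDiff ℝ n u →
    (∀ j ≤ n, iteratedDeriv j f a = 0) → ∀ r ≤ n, iteratedDeriv r (fun x => f x * u x) a = 0 := by
  intro n
  induction n with
  | zero =>
    intro a f u _ _ hj r hr
    have : r = 0 := Nat.le_zero.mp hr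
    subst this
    simp only [iteratedDeriv_zero]
    rw [show f a = 0 from hj 0 le_rfl, zero_mul]
  | succ n IH =>
    intro a f u hf hu hj r hr
    match r with
    | 0 =>
      simp only [iteratedDeriv_zero]
      rw [show f a = 0 from hj 0 (Nat.zero_le _), zero_mul]
    | Nat.succ m =>
      have hf' : ContDiff ℝ ((n : WithTop ℕ∞) + 1) f := by exact_mod_cast hf
      have hu' : ContDiff ℝ ((n : WithTop ℕ∞) + 1) u := by exact_mod_cast hu
      obtain ⟨hfd, -, hfderiv⟩ := contDiff_succ_iff_deriv.mp hf'
      obtain ⟨hud, -, huderiv⟩ := contDiff_succ_iff_deriv.mp hu'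
      have hderiv : deriv (fun x => f x * u x) = fun x => deriv f x * u x + f x * deriv u x := by
        funext x
        exact deriv_mul (hfd x) (hud x)
      rw [iteratedDeriv_succ', hderiv]
      have hm : m ≤ n := Nat.succ_le_succ_iff.mp hr
      have hfn : ContDiff ℝ (n : ℕ) f := hf.of_succ
      have hun : ContDiff ℝ (n : ℕ) u := hu.of_succ
      have h1 : iteratedDeriv m (fun x => deriv f x * u x) a = 0 := by
        refine IH a (deriv f) u hfderiv hun (fun j hj' => ?_) m hm
        rw [← iteratedDeriv_succ']
        exact hj (j + 1) (Nat.succ_le_succ hj')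
      have h2 : iteratedDeriv m (fun x => f x * deriv u x) a = 0 := by
        refine IH a f (deriv u) hfn huderiv (fun j hj' => hj j (le_trans hj' n.le_succ)) m hm
      have hc1 : ContDiff ℝ (m : ℕ) (fun x => deriv f x * u x) :=
        (hfderiv.mul hun).of_le (by exact_mod_cast hm)
      have hc2 : ContDiff ℝ (m : ℕ) (fun x => f x * deriv u x) :=
        (hfn.mul huderiv).of_le (by exact_mod_cast hm)
      rw [my_iteratedDeriv_add hc1 hc2, h1, h2, add_zero]

/-- If all derivatives of `g` up to order `n` vanish at `w a`, then all derivatives of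
`g ∘ w` up to order `n` vanish at `a`. -/
private lemma my_comp_vanish : ∀ (n : ℕ) (a : ℝ) (g w : ℝ → ℝ), ContDiff ℝ n g → ContDiff ℝ n w →
    (∀ j ≤ n, iteratedDeriv j g (w a) = 0) → ∀ r ≤ n, iteratedDeriv r (fun x => g (w x)) a = 0 := by
  intro n
  induction n with
  | zero =>
    intro a g w _ _ hj r hr
    have : r = 0 := Nat.le_zero.mp hr
    subst this
    simpa only [iteratedDeriv_zero] using hj 0 le_rfl
  | succ n IH =>
    intro a g w hg hw hj r hr
    match r with
    | 0 => simpa only [iteratedDeriv_zero] using hj 0 (Nat.zero_le _)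
    | Nat.succ m =>
      have hg' : ContDiff ℝ ((n : WithTop ℕ∞) + 1) g := by exact_mod_cast hg
      have hw' : ContDiff ℝ ((n : WithTop ℕ∞) + 1) w := by exact_mod_cast hw
      obtain ⟨hgd, -, hgderiv⟩ := contDiff_succ_iff_deriv.mp hg'
      obtain ⟨hwd, -, hwderiv⟩ := contDiff_succ_iff_deriv.mp hw'
      have hwn : ContDiff ℝ (n : ℕ) w := hw.of_succ
      have hchain : deriv (fun x => g (w x)) = fun x => deriv g (w x) * deriv w x := by
        funext x
        exact deriv_comp x (hgd (w x)) (hwd x)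
      rw [iteratedDeriv_succ', hchain]
      refine my_mul_vanish n a (fun x => deriv g (w x)) (deriv w)
        (hgderiv.comp hwn) hwderiv (fun j hj' => ?_) m (Nat.succ_le_succ_iff.mp hr)
      refine IH a (deriv g) w hgderiv hwn (fun i hi => ?_) j hj'
      rw [← iteratedDeriv_succ']
      exact hj (i + 1) (Nat.succ_le_succ hi)

end Aux

set_option maxHeartbeats 1000000 in
/-- **Vanishing derivatives of the time-averaging factor at zero frequency.**
For `K ∈ 𝕂^{p,q}` and a `C^p` dispersion relation `ω` with `ω(0) = 0`, the
time-averaging factor `s(k) = ∫ K_η(t) cos(ω(k) t/ε) dt` is `p` times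
differentiable at `k = 0`, with `s(0) = 1` and `s^{(r)}(0) = 0` for `1 ≤ r ≤ p`. -/
theorem stmt_10 (p q : ℕ) (hp : 1 ≤ p) (hq : 1 ≤ q)
    (K : ℝ → ℝ) (hK : ContDiff ℝ (q : ℕ∞) K)
    (hKsupp : Function.support K ⊆ Set.Icc (-1 : ℝ) 1)
    (hKint : ∫ x : ℝ, K x = 1)
    (hKmom : ∀ j : ℕ, 1 ≤ j → j ≤ p → ∫ x : ℝ, K x * x ^ j = 0)
    (ω : ℝ → ℝ) (hω : ContDiff ℝ (p : ℕ∞) ω) (hω0 : ω 0 = 0)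
    (ε η : ℝ) (hε : 0 < ε) (hη : 0 < η)
    (s : ℝ → ℝ)
    (hs : ∀ k : ℝ, s k = ∫ t : ℝ, (η⁻¹ * K (t / η)) * Real.cos (ω k * t / ε)) :
    ContDiffAt ℝ (p : ℕ∞) s 0 ∧ s 0 = 1 ∧
      ∀ r : ℕ, 1 ≤ r → r ≤ p → iteratedDeriv r s 0 = 0 := by
  have hπ : (0 : ℝ) < Real.pi := Real.pi_pos
  set Kc : ℝ → ℂ := fun x => (K x : ℂ) with hKcdef
  have hKcont : Continuous K := hK.continuous
  have hKcs : HasCompactSupport K := by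
    apply HasCompactSupport.intro (isCompact_Icc (a := (-1 : ℝ)) (b := 1))
    intro x hx
    by_contra h
    exact hx (hKsupp h)
  have hKccont : Continuous Kc := Complex.continuous_ofReal.comp hKcont
  have hKccs : HasCompactSupport Kc :=
    hKcs.comp_left (g := fun r : ℝ => (r : ℂ)) Complex.ofReal_zero
  -- integrability facts
  have hint : ∀ n : ℕ, Integrable (fun x : ℝ => x ^ n • Kc x) := fun n =>
    ((continuous_pow n).smul hKccont).integrable_of_hasCompactSupport (my_hcs_smul (R := ℝ) hKccs (fun x : ℝ => x ^ n))
  have hnint : ∀ n : ℕ, Integrable (fun x : ℝ => ‖x‖ ^ n * ‖Kc x‖) := by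
    intro n
    have := (hint n).norm
    refine this.congr ?_
    filter_upwards with x
    simp [norm_smul, abs_pow]
  -- the Fourier transform of Kc
  set F : ℝ → ℂ := FourierTransform.fourier Kc with hFdef
  have hFsmooth : ∀ n : ℕ, ContDiff ℝ (n : ℕ) F :=
    fun n => Real.contDiff_fourier (N := (n : ℕ∞)) (fun k _ => hnint k)
  have hFp : ContDiff ℝ (p : ℕ∞) F :=
    Real.contDiff_fourier (N := (p : ℕ∞)) (fun k _ => hnint k)
  -- derivatives of F at 0
  have hFd : ∀ n : ℕ, iteratedDeriv n F 0
      = (-2 * (Real.pi : ℂ) * Complex.I) ^ n * ((∫ x : ℝ, x ^ n * K x : ℝ) : ℂ) := by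
    intro n
    have h := Real.iteratedDeriv_fourier (f := Kc) (N := (n : ℕ∞))
      (fun k _ => hint k) (le_refl (n : ℕ∞))
    rw [hFdef, h, Real.fourier_real_eq_integral_exp_smul]
    have heq : ∀ v : ℝ, Complex.exp (((-2 : ℝ) * Real.pi * v * 0 : ℝ) * Complex.I) •
        ((-2 * (Real.pi : ℂ) * Complex.I * (v : ℂ)) ^ n • Kc v)
        = (-2 * (Real.pi : ℂ) * Complex.I) ^ n • (((v ^ n * K v : ℝ) : ℂ)) := by
      intro v
      have : ((-2 : ℝ) * Real.pi * v * 0 : ℝ) = 0 := by ring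
      rw [this]
      simp only [Complex.ofReal_zero, zero_mul, Complex.exp_zero, one_smul, smul_eq_mul]
      push_cast
      ring
    simp only [heq]
    rw [integral_smul, smul_eq_mul]
    congr 1
    exact integral_ofReal
  have hF0 : F 0 = 1 := by
    have h0 := hFd 0
    simp only [iteratedDeriv_zero, pow_zero, one_mul] at h0
    rw [h0, hKint, Complex.ofReal_one]
  have hFvanish : ∀ n : ℕ, 1 ≤ n → n ≤ p → iteratedDeriv n F 0 = 0 := by
    intro n h1 h2
    rw [hFd n]
    have : (∫ x : ℝ, x ^ n * K x) = 0 := by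
      rw [← hKmom n h1 h2]
      congr 1
      funext x
      ring
    rw [this]
    simp
  -- the real scaling factor
  set b : ℝ := η / (ε * (2 * Real.pi)) with hbdef
  set G : ℝ → ℝ := fun u => (F (b * u)).re with hGdef
  have hGp : ContDiff ℝ (p : ℕ∞) G :=
    Complex.reCLM.contDiff.comp (hFp.comp (contDiff_const.mul contDiff_id))
  have hGn : ∀ n : ℕ, ContDiff ℝ (n : ℕ) G := fun n =>
    Complex.reCLM.contDiff.comp ((hFsmooth n).comp (contDiff_const.mul contDiff_id))
  -- derivatives of G at 0
  have hGd : ∀ n : ℕ, iteratedDeriv n G 0 = b ^ n * (iteratedDeriv n F 0).re := by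
    intro n
    have h1 : iteratedDeriv n (fun u => F (b * u)) = fun u => b ^ n • iteratedDeriv n F (b * u) :=
      iteratedDeriv_comp_const_smul (hFsmooth n) b
    have hcomp : ContDiff ℝ (n : ℕ) (fun u => F (b * u)) :=
      (hFsmooth n).comp (contDiff_const.mul contDiff_id)
    have h2 : iteratedDeriv n G 0 = (iteratedDeriv n (fun u => F (b * u)) 0).re := by
      have h3 := Complex.reCLM.iteratedFDeriv_comp_left (f := fun u => F (b * u)) (hcomp.contDiffAt (x := (0 : ℝ)))
        le_rfl
      have h4 : G = ⇑Complex.reCLM ∘ (fun u => F (b * u)) := rfl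
      rw [h4, iteratedDeriv_eq_iteratedFDeriv, iteratedDeriv_eq_iteratedFDeriv, h3]
      rfl
    rw [h2, h1]
    simp only [mul_zero]
    rw [Complex.real_smul, Complex.re_ofReal_mul]
  have hG0 : G 0 = 1 := by
    rw [hGdef]
    simp only [mul_zero, hF0, Complex.one_re]
  have hGvanish : ∀ n : ℕ, 1 ≤ n → n ≤ p → iteratedDeriv n G 0 = 0 := by
    intro n h1 h2
    rw [hGd n, hFvanish n h1 h2]
    simp
  -- s = G ∘ ω
  have hsG : s = fun k => G (ω k) := by
    funext k
    rw [hs k, hGdef]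
    -- rewrite the left-hand side by the substitution t = η x
    have hφ : (∫ t : ℝ, (η⁻¹ * K (t / η)) * Real.cos (ω k * t / ε))
        = ∫ x : ℝ, K x * Real.cos (ω k * (η * x) / ε) := by
      have hsub : ∀ t : ℝ, (η⁻¹ * K (t / η)) * Real.cos (ω k * t / ε)
          = (fun x : ℝ => η⁻¹ * (K x * Real.cos (ω k * (η * x) / ε))) (t / η) := by
        intro t
        have ht : η * (t / η) = t := by field_simp
        simp only [ht]
        ring
      calc (∫ t : ℝ, (η⁻¹ * K (t / η)) * Real.cos (ω k * t / ε))
          = ∫ t : ℝ, (fun x : ℝ => η⁻¹ * (K x * Real.cos (ω k * (η * x) / ε))) (t / η) := by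
            congr 1; funext t; exact hsub t
        _ = |η| • ∫ x : ℝ, η⁻¹ * (K x * Real.cos (ω k * (η * x) / ε)) :=
            MeasureTheory.Measure.integral_comp_div
              (fun x : ℝ => η⁻¹ * (K x * Real.cos (ω k * (η * x) / ε))) η
        _ = ∫ x : ℝ, K x * Real.cos (ω k * (η * x) / ε) := by
            rw [MeasureTheory.integral_const_mul, abs_of_pos hη, smul_eq_mul, ← mul_assoc,
              mul_inv_cancel₀ hη.ne', one_mul]
    rw [hφ]
    -- now compute the real part of F (b * ω k)
    have hI : Integrable (fun v : ℝ =>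
        Complex.exp (((-2 : ℝ) * Real.pi * v * (b * ω k) : ℝ) * Complex.I) • Kc v) := by
      have hc1 : Continuous fun v : ℝ => ((-2 : ℝ) * Real.pi * v * (b * ω k) : ℝ) :=
        (continuous_const.mul continuous_id).mul continuous_const
      have hc2 : Continuous fun v : ℝ =>
          Complex.exp (((-2 : ℝ) * Real.pi * v * (b * ω k) : ℝ) * Complex.I) :=
        Complex.continuous_exp.comp ((Complex.continuous_ofReal.comp hc1).mul continuous_const)
      exact (hc2.smul hKccont).integrable_of_hasCompactSupport (my_hcs_smul (R := ℂ) hKccs (fun v : ℝ =>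
          Complex.exp (((-2 : ℝ) * Real.pi * v * (b * ω k) : ℝ) * Complex.I)))
    have h5 := Real.fourier_real_eq_integral_exp_smul Kc (b * ω k)
    have h6 := integral_re hI
    simp only [RCLike.re_to_complex] at h6
    rw [hFdef]
    show (∫ x : ℝ, K x * Real.cos (ω k * (η * x) / ε)) = (FourierTransform.fourier Kc (b * ω k)).re
    rw [h5, ← h6]
    congr 1
    funext v
    have hre : (Complex.exp (((-2 : ℝ) * Real.pi * v * (b * ω k) : ℝ) * Complex.I) • Kc v).re
        = Real.cos ((-2 : ℝ) * Real.pi * v * (b * ω k)) * K v := by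
      rw [smul_eq_mul, hKcdef]
      simp only [Complex.mul_re, Complex.ofReal_re, Complex.ofReal_im, mul_zero, sub_zero]
      rw [Complex.exp_ofReal_mul_I_re]
    rw [hre]
    have harg : (-2 : ℝ) * Real.pi * v * (b * ω k) = -(ω k * (η * v) / ε) := by
      rw [hbdef]
      field_simp
    rw [harg, Real.cos_neg, mul_comm]
  -- conclude
  refine ⟨?_, ?_, ?_⟩
  · rw [hsG]
    exact (hGp.comp hω).contDiffAt
  · rw [hsG]
    simp only [hω0]
    exact hG0
  · intro r h1 h2
    -- work with G₁ = G - 1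
    set G₁ : ℝ → ℝ := fun u => G u - 1 with hG₁def
    have hG₁n : ContDiff ℝ (p : ℕ) G₁ := by
      have : ContDiff ℝ (p : ℕ∞) G₁ := hGp.sub contDiff_const
      exact_mod_cast this
    have hωn : ContDiff ℝ (p : ℕ) ω := by exact_mod_cast hω
    have hG₁vanish : ∀ j ≤ p, iteratedDeriv j G₁ (ω 0) = 0 := by
      intro j hj
      rw [hω0]
      match j with
      | 0 => simp only [iteratedDeriv_zero, hG₁def, hG0, sub_self]
      | Nat.succ m =>
        have hd : deriv G₁ = deriv G := by
          funext x
          exact deriv_sub_const 1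
        rw [iteratedDeriv_succ', hd, ← iteratedDeriv_succ']
        exact hGvanish (m + 1) (Nat.succ_le_succ (Nat.zero_le _)) hj
    have hcomp0 : ∀ m ≤ p, iteratedDeriv m (fun k => G₁ (ω k)) 0 = 0 :=
      fun m hm => my_comp_vanish p 0 G₁ ω hG₁n hωn hG₁vanish m hm
    -- relate iteratedDeriv r s to iteratedDeriv r (G₁ ∘ ω)
    obtain ⟨m, rfl⟩ := Nat.exists_eq_succ_of_ne_zero (by omega : r ≠ 0)
    have hseq : s = fun k => G₁ (ω k) + 1 := by
      rw [hsG]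
      funext k
      simp [hG₁def]
    have hds : deriv s = deriv (fun k => G₁ (ω k)) := by
      funext x
      rw [hseq]
      exact deriv_add_const 1
    rw [iteratedDeriv_succ', hds, ← iteratedDeriv_succ']
    exact hcomp0 (m + 1) h2
end

section
/- Let K : ℝ → ℝ be continuously differentiable with support contained in [−1,1], and let a : ℝ → ℝ be 1-periodic and continuously differentiable. Let ε, η > 0 with α := ε/η ≤ 1, let k ∈ ℝ, and let ψ : ℝ → ℂ be 1-periodic, locally square-integrable, with ∫₀¹ |ψ(x)|² dx = 1. Define h̃(x) := −(ε/η²) K′(x/η) a(x/ε) − (1/η) K(x/η) a′(x/ε) and w := ∫_ℝ h̃(x) ψ(x/ε) e^{i k x/ε} dx. Then |w| ≤ C, where C depends only on K and a (in particular, C is independent of ε, η, k and ψ). -/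
open MeasureTheory

/-- Lebesgue measure restricted to one period `(0,1]`, giving the space `L²(0,1)`. -/
noncomputable def μ01 : Measure ℝ := volume.restrict (Set.Ioc (0 : ℝ) 1)

/-- A 1-periodic function interval-integrable on `[0,1]` is interval integrable everywhere. -/
lemma periodic_intervalIntegrable {f : ℝ → ℝ} (hf : Function.Periodic f 1)
    (h1 : IntervalIntegrable f volume 0 1) :
    ∀ t₁ t₂ : ℝ, IntervalIntegrable f volume t₁ t₂ := by
  have hz : ∀ m : ℤ, IntervalIntegrable f volume (m : ℝ) ((m : ℝ) + 1) := by
    intro m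
    have h2 := h1.comp_add_right (-(m : ℝ))
    have heq : (fun x => f (x + -(m : ℝ))) = f := funext fun x => by
      simpa [sub_eq_add_neg] using hf.sub_int_mul_eq (x := x) m
    rw [heq] at h2
    simpa [sub_neg_eq_add, add_comm] using h2
  have hN : ∀ N : ℕ, IntervalIntegrable f volume (-(N : ℝ)) (N : ℝ) := by
    intro N
    induction N with
    | zero =>
      have h := hz 0
      norm_num at h
      have h0 : IntervalIntegrable f volume 0 0 := h.mono_set (by
        rw [Set.uIcc_self]
        exact Set.singleton_subset_iff.2 Set.left_mem_uIcc)
      simpa using h0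
    | succ N ih =>
      have hl : IntervalIntegrable f volume (-((N : ℝ) + 1)) (-(N : ℝ)) := by
        have h := hz (-(N : ℤ) - 1)
        have e1 : ((-(N : ℤ) - 1 : ℤ) : ℝ) = -((N : ℝ) + 1) := by push_cast; ring
        have e2 : ((-(N : ℤ) - 1 : ℤ) : ℝ) + 1 = -(N : ℝ) := by push_cast; ring
        rwa [e2, e1] at h
      have hr : IntervalIntegrable f volume (N : ℝ) ((N : ℝ) + 1) := by
        have h := hz (N : ℤ); push_cast at h; exact h
      have h := (hl.trans ih).trans hr
      have e : ((N + 1 : ℕ) : ℝ) = (N : ℝ) + 1 := by push_cast; ring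
      rw [e]; exact h
  intro t₁ t₂
  set N := ⌈max |t₁| |t₂|⌉₊ with hNdef
  have key : ∀ t : ℝ, |t| ≤ max |t₁| |t₂| → t ∈ Set.uIcc (-(N : ℝ)) (N : ℝ) := by
    intro t ht
    have h1 : |t| ≤ (N : ℝ) := ht.trans (Nat.le_ceil _)
    have h2 : -(N : ℝ) ≤ (N : ℝ) := by
      have := abs_nonneg t; linarith
    rw [Set.uIcc_of_le h2]
    exact Set.mem_Icc.2 (abs_le.1 h1)
  exact (hN N).mono_set
    (Set.uIcc_subset_uIcc (key t₁ (le_max_left _ _)) (key t₂ (le_max_right _ _)))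

/-- A continuous function vanishing outside `[-1,1]` is bounded. -/
lemma bound_of_supp {f : ℝ → ℝ} (hf : Continuous f)
    (hs : ∀ x, x ∉ Set.Icc (-1 : ℝ) 1 → f x = 0) :
    ∃ M : ℝ, 0 ≤ M ∧ ∀ x, |f x| ≤ M := by
  obtain ⟨M, hM⟩ :=
    (isCompact_Icc (a := (-1 : ℝ)) (b := 1)).exists_bound_of_continuousOn hf.continuousOn
  refine ⟨max M 0, le_max_right _ _, fun x => ?_⟩
  by_cases hx : x ∈ Set.Icc (-1 : ℝ) 1
  · exact ((Real.norm_eq_abs _ ▸ hM x hx).trans (le_max_left _ _))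
  · simp [hs x hx]

/-- A continuous 1-periodic function is bounded. -/
lemma bound_of_per {f : ℝ → ℝ} (hf : Continuous f) (hp : Function.Periodic f 1) :
    ∃ M : ℝ, 0 ≤ M ∧ ∀ x, |f x| ≤ M := by
  obtain ⟨M, hM⟩ :=
    (isCompact_Icc (a := (0 : ℝ)) (b := 1)).exists_bound_of_continuousOn hf.continuousOn
  refine ⟨max M 0, le_max_right _ _, fun x => ?_⟩
  set y := x - ((⌊x⌋ : ℤ) : ℝ) with hy
  have hy1 : y ∈ Set.Icc (0 : ℝ) 1 :=
    ⟨by have := Int.floor_le x; simp only [hy]; linarith,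
     by have := Int.lt_floor_add_one x; simp only [hy]; linarith⟩
  have hfy : f y = f x := by simpa [hy] using hp.sub_int_mul_eq (x := x) ⌊x⌋
  calc |f x| = |f y| := by rw [hfy]
    _ ≤ M := by have := hM y hy1; rwa [Real.norm_eq_abs] at this
    _ ≤ max M 0 := le_max_left _ _

set_option maxHeartbeats 1000000 in
/-- **Uniform bound on the space-averaged flux coefficient.**
With `K` a `C¹` kernel supported in `[-1,1]` and `a` 1-periodic `C¹`, there is
`C > 0` depending only on `K` and `a` such that for all `ε, η > 0` with
`α = ε/η ≤ 1`, all `k ∈ ℝ`, and every 1-periodic locally square-integrable `ψ`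
normalized by `∫₀¹ |ψ|² = 1`, the quantity
`w = ∫ h̃(x) ψ(x/ε) e^{ikx/ε} dx`, where
`h̃(x) = -(ε/η²) K'(x/η) a(x/ε) - (1/η) K(x/η) a'(x/ε)`, satisfies `|w| ≤ C`. -/
theorem stmt_12
    (K : ℝ → ℝ) (hK : ContDiff ℝ 1 K)
    (hKsupp : Function.support K ⊆ Set.Icc (-1 : ℝ) 1)
    (a : ℝ → ℝ) (ha : ContDiff ℝ 1 a) (haper : ∀ x : ℝ, a (x + 1) = a x) :
    ∃ C > (0 : ℝ), ∀ ε η k : ℝ, 0 < ε → 0 < η → ε / η ≤ 1 →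
      ∀ ψ : ℝ → ℂ, (∀ x : ℝ, ψ (x + 1) = ψ x) → MemLp ψ 2 μ01 →
        (∫ x in (0 : ℝ)..1, ‖ψ x‖ ^ 2) = 1 →
        ‖∫ x : ℝ, ((-(ε / η ^ 2) * deriv K (x / η) * a (x / ε) -
              (1 / η) * K (x / η) * deriv a (x / ε) : ℝ) : ℂ) *
            ψ (x / ε) * Complex.exp (Complex.I * k * x / ε)‖ ≤ C := by
  -- vanishing of K and deriv K outside [-1,1]
  have hK0 : ∀ x, x ∉ Set.Icc (-1 : ℝ) 1 → K x = 0 := fun x hx => by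
    by_contra h; exact hx (hKsupp (Function.mem_support.2 h))
  have hK'0 : ∀ x, x ∉ Set.Icc (-1 : ℝ) 1 → deriv K x = 0 := by
    intro x hx
    have hop : IsOpen (Set.Icc (-1 : ℝ) 1)ᶜ := isClosed_Icc.isOpen_compl
    have hev : K =ᶠ[nhds x] (fun _ => (0 : ℝ)) :=
      Filter.eventually_of_mem (hop.mem_nhds hx) (fun y hy => hK0 y hy)
    rw [hev.deriv_eq]; simp
  -- periodicity of a and deriv a
  have hapa : Function.Periodic a 1 := haper
  have haper' : ∀ x : ℝ, deriv a (x + 1) = deriv a x := by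
    intro x
    have h1 : deriv (fun y => a (y + 1)) x = deriv a (x + 1) := deriv_comp_add_const a 1 x
    have h2 : (fun y => a (y + 1)) = a := funext haper
    rw [h2] at h1; exact h1.symm
  -- bounds
  obtain ⟨MK, hMK0, hMK⟩ := bound_of_supp (hK.continuous) hK0
  obtain ⟨MK', hMK'0, hMK'⟩ := bound_of_supp (hK.continuous_deriv le_rfl) hK'0
  obtain ⟨Ma, hMa0, hMa⟩ := bound_of_per ha.continuous hapa
  obtain ⟨Ma', hMa'0, hMa'⟩ := bound_of_per (ha.continuous_deriv le_rfl) haper'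
  set M : ℝ := MK' * Ma + MK * Ma' + 1 with hMdef
  have hM0 : 0 < M := by positivity
  refine ⟨4 * M, by positivity, ?_⟩
  intro ε η k hε hη hα ψ hψper hψL2 hψnorm
  have hεη : ε ≤ η := (div_le_one hη).1 hα
  -- the norm function φ
  set φ : ℝ → ℝ := fun y => ‖ψ y‖ with hφdef
  have hφper : Function.Periodic φ 1 := fun x => by simp only [hφdef, hψper x]
  haveI : IsFiniteMeasure μ01 := by
    constructor
    simp [μ01, Real.volume_Ioc]
  have hψInt : Integrable ψ μ01 := hψL2.integrable (by norm_num)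
  have hφ1 : IntervalIntegrable φ volume 0 1 :=
    (intervalIntegrable_iff_integrableOn_Ioc_of_le zero_le_one).mpr hψInt.norm
  have hφInt := periodic_intervalIntegrable hφper hφ1
  have hφsq : IntervalIntegrable (fun y => φ y ^ 2) volume 0 1 :=
    (intervalIntegrable_iff_integrableOn_Ioc_of_le zero_le_one).mpr hψL2.norm.integrable_sq
  -- ∫₀¹ φ ≤ 1
  have hI1nonneg : 0 ≤ ∫ x in (0 : ℝ)..1, φ x :=
    intervalIntegral.integral_nonneg zero_le_one (fun x _ => norm_nonneg _)
  have hI1 : (∫ x in (0 : ℝ)..1, φ x) ≤ 1 := by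
    have hb : ∀ x ∈ Set.Icc (0 : ℝ) 1, φ x ≤ (1 + φ x ^ 2) / 2 := by
      intro x _; nlinarith [sq_nonneg (φ x - 1)]
    have hInt2 : IntervalIntegrable (fun x => (1 + φ x ^ 2) / 2) volume 0 1 :=
      ((intervalIntegrable_const.add hφsq).div_const 2)
    have hmono := intervalIntegral.integral_mono_on zero_le_one hφ1 hInt2 hb
    have hcalc : (∫ x in (0 : ℝ)..1, (1 + φ x ^ 2) / 2)
        = (1 + ∫ x in (0 : ℝ)..1, φ x ^ 2) / 2 := by
      rw [intervalIntegral.integral_div,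
        intervalIntegral.integral_add intervalIntegrable_const hφsq]
      simp
    rw [hcalc, hψnorm] at hmono
    exact hmono.trans (by norm_num)
  -- the number of periods
  set n : ℕ := ⌈η / ε⌉₊ with hndef
  have hT1 : 1 ≤ η / ε := (one_le_div hε).2 hεη
  have hTn : η / ε ≤ (n : ℝ) := Nat.le_ceil _
  have hn2 : (n : ℝ) * ε ≤ 2 * η := by
    have h1 : (n : ℝ) < η / ε + 1 := Nat.ceil_lt_add_one (by positivity)
    have h2 : (n : ℝ) < 2 * (η / ε) := by linarith
    calc (n : ℝ) * ε ≤ 2 * (η / ε) * ε := by nlinarith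
      _ = 2 * η := by field_simp
  have hηn : η ≤ (n : ℝ) * ε := by
    have h := mul_le_mul_of_nonneg_right hTn hε.le
    calc η = η / ε * ε := by field_simp
      _ ≤ (n : ℝ) * ε := h
  -- the dominating function
  set S : Set ℝ := Set.Icc (-((n : ℝ) * ε)) ((n : ℝ) * ε) with hSdef
  set g : ℝ → ℝ := fun x => (M / η) * Set.indicator S (fun x => φ (x / ε)) x with hgdef
  have hSle : -((n : ℝ) * ε) ≤ (n : ℝ) * ε := by
    have : (0:ℝ) ≤ (n:ℝ) * ε := by positivity
    linarith
  -- integrability of g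
  have hcomp : IntervalIntegrable (fun x => φ (x / ε)) volume (-((n : ℝ) * ε)) ((n : ℝ) * ε) := by
    have h := (hφInt (-(n : ℝ)) (n : ℝ)).comp_mul_right (c := ε⁻¹)
    have e1 : -(n : ℝ) / ε⁻¹ = -((n : ℝ) * ε) := by field_simp
    have e2 : (n : ℝ) / ε⁻¹ = (n : ℝ) * ε := by field_simp
    have e3 : (fun x => φ (x * ε⁻¹)) = fun x => φ (x / ε) := by
      funext x; rw [div_eq_mul_inv]
    rw [e1, e2, e3] at h
    exact h
  have hIndInt : Integrable (Set.indicator S (fun x => φ (x / ε))) volume := by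
    rw [integrable_indicator_iff measurableSet_Icc]
    rw [integrableOn_Icc_iff_integrableOn_Ioc]
    exact (intervalIntegrable_iff_integrableOn_Ioc_of_le hSle).1 hcomp
  have hgInt : Integrable g volume := hIndInt.const_mul (M / η)
  have hgnn : ∀ x, 0 ≤ g x := fun x =>
    mul_nonneg (by positivity) (Set.indicator_nonneg (fun y _ => norm_nonneg _) x)
  -- pointwise bound
  have hbound : ∀ x : ℝ,
      ‖((-(ε / η ^ 2) * deriv K (x / η) * a (x / ε) -
            (1 / η) * K (x / η) * deriv a (x / ε) : ℝ) : ℂ) *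
          ψ (x / ε) * Complex.exp (Complex.I * k * x / ε)‖ ≤ g x := by
    intro x
    have hexp : ‖Complex.exp (Complex.I * k * x / ε)‖ = 1 := by
      have e : (Complex.I * k * x / ε : ℂ) = ((k * x / ε : ℝ) : ℂ) * Complex.I := by
        push_cast; ring
      rw [e]
      exact Complex.norm_exp_ofReal_mul_I _
    rw [norm_mul, norm_mul, hexp, Complex.norm_real, Real.norm_eq_abs, mul_one]
    by_cases hx : x ∈ Set.Icc (-η) η
    · have hxS : x ∈ S := by
        rw [hSdef]
        exact Set.Icc_subset_Icc (by linarith) hηn hx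
      have hind : g x = (M / η) * φ (x / ε) := by
        rw [hgdef]; simp only
        rw [Set.indicator_of_mem hxS]
      rw [hind]
      have h1 : |(-(ε / η ^ 2) * deriv K (x / η) * a (x / ε))| ≤ ε / η ^ 2 * (MK' * Ma) := by
        rw [abs_mul, abs_mul, abs_neg, abs_of_nonneg (by positivity : (0:ℝ) ≤ ε / η ^ 2)]
        have b1 := hMK' (x / η); have b2 := hMa (x / ε)
        have n2 := abs_nonneg (a (x / ε))
        have hc : (0:ℝ) ≤ ε / η ^ 2 := by positivity
        have hmm : |deriv K (x / η)| * |a (x / ε)| ≤ MK' * Ma :=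
          mul_le_mul b1 b2 n2 hMK'0
        calc ε / η ^ 2 * |deriv K (x / η)| * |a (x / ε)|
            = ε / η ^ 2 * (|deriv K (x / η)| * |a (x / ε)|) := by ring
          _ ≤ ε / η ^ 2 * (MK' * Ma) := mul_le_mul_of_nonneg_left hmm hc
      have h2 : |((1 / η) * K (x / η) * deriv a (x / ε))| ≤ 1 / η * (MK * Ma') := by
        rw [abs_mul, abs_mul, abs_of_nonneg (by positivity : (0:ℝ) ≤ 1 / η)]
        have b1 := hMK (x / η); have b2 := hMa' (x / ε)
        have n2 := abs_nonneg (deriv a (x / ε))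
        have hc : (0:ℝ) ≤ 1 / η := by positivity
        have hmm : |K (x / η)| * |deriv a (x / ε)| ≤ MK * Ma' :=
          mul_le_mul b1 b2 n2 hMK0
        calc 1 / η * |K (x / η)| * |deriv a (x / ε)|
            = 1 / η * (|K (x / η)| * |deriv a (x / ε)|) := by ring
          _ ≤ 1 / η * (MK * Ma') := mul_le_mul_of_nonneg_left hmm hc
      have h3 : ε / η ^ 2 * (MK' * Ma) ≤ 1 / η * (MK' * Ma) := by
        have h4 : ε / η ^ 2 ≤ 1 / η := by
          rw [div_le_div_iff₀ (by positivity) hη]; nlinarith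
        have : (0:ℝ) ≤ MK' * Ma := by positivity
        nlinarith
      have habs : |(-(ε / η ^ 2) * deriv K (x / η) * a (x / ε) -
            (1 / η) * K (x / η) * deriv a (x / ε))| ≤ M / η := by
        calc |(-(ε / η ^ 2) * deriv K (x / η) * a (x / ε) -
              (1 / η) * K (x / η) * deriv a (x / ε))|
            ≤ |(-(ε / η ^ 2) * deriv K (x / η) * a (x / ε))| +
              |((1 / η) * K (x / η) * deriv a (x / ε))| := by
              rw [sub_eq_add_neg]
              exact (abs_add_le _ _).trans (by rw [abs_neg])
          _ ≤ 1 / η * (MK' * Ma) + 1 / η * (MK * Ma') := by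
              have := h1.trans h3; linarith
          _ ≤ M / η := by
              rw [hMdef]
              rw [div_eq_mul_inv M η, one_div]
              have hη' : (0:ℝ) ≤ η⁻¹ := by positivity
              nlinarith
      exact mul_le_mul_of_nonneg_right habs (norm_nonneg _)
    · have hxout : x / η ∉ Set.Icc (-1 : ℝ) 1 := by
        intro hmem
        rcases Set.mem_Icc.1 hmem with ⟨hm1, hm2⟩
        apply hx
        refine Set.mem_Icc.2 ⟨?_, ?_⟩
        · have := mul_le_mul_of_nonneg_right hm1 hη.le
          calc -η = -1 * η := by ring
            _ ≤ x / η * η := this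
            _ = x := by field_simp
        · have := mul_le_mul_of_nonneg_right hm2 hη.le
          calc x = x / η * η := by field_simp
            _ ≤ 1 * η := this
            _ = η := by ring
      rw [hK0 _ hxout, hK'0 _ hxout]
      rw [show (-(ε / η ^ 2) * 0 * a (x / ε) - 1 / η * 0 * deriv a (x / ε) : ℝ) = 0 by ring,
        abs_zero, zero_mul]
      exact hgnn x
  -- final estimate
  calc ‖∫ x : ℝ, ((-(ε / η ^ 2) * deriv K (x / η) * a (x / ε) -
              (1 / η) * K (x / η) * deriv a (x / ε) : ℝ) : ℂ) *
            ψ (x / ε) * Complex.exp (Complex.I * k * x / ε)‖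
      ≤ ∫ x : ℝ, ‖((-(ε / η ^ 2) * deriv K (x / η) * a (x / ε) -
              (1 / η) * K (x / η) * deriv a (x / ε) : ℝ) : ℂ) *
            ψ (x / ε) * Complex.exp (Complex.I * k * x / ε)‖ :=
        norm_integral_le_integral_norm _
    _ ≤ ∫ x : ℝ, g x :=
        integral_mono_of_nonneg (Filter.Eventually.of_forall fun x => norm_nonneg _)
          hgInt (Filter.Eventually.of_forall hbound)
    _ ≤ 4 * M := by
        have hcalc1 : (∫ x : ℝ, g x)
            = (M / η) * ∫ x : ℝ, Set.indicator S (fun x => φ (x / ε)) x := by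
          rw [hgdef]; exact MeasureTheory.integral_const_mul _ _
        have hcalc2 : (∫ x : ℝ, Set.indicator S (fun x => φ (x / ε)) x)
            = ∫ x in (-((n : ℝ) * ε))..((n : ℝ) * ε), φ (x / ε) := by
          rw [integral_indicator measurableSet_Icc, integral_Icc_eq_integral_Ioc,
            intervalIntegral.integral_of_le hSle]
        have hcalc3 : (∫ x in (-((n : ℝ) * ε))..((n : ℝ) * ε), φ (x / ε))
            = ε * ∫ y in (-(n : ℝ))..(n : ℝ), φ y := by
          rw [intervalIntegral.integral_comp_div (f := φ) hε.ne']
          have e1 : -((n : ℝ) * ε) / ε = -(n : ℝ) := by field_simp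
          have e2 : ((n : ℝ) * ε) / ε = (n : ℝ) := by field_simp
          rw [e1, e2, smul_eq_mul]
        have hzs := hφper.intervalIntegral_add_zsmul_eq (2 * (n : ℤ)) (-(n : ℝ)) hφInt
        have he : -(n : ℝ) + (2 * (n : ℤ) : ℤ) • (1 : ℝ) = (n : ℝ) := by
          rw [zsmul_eq_mul]; push_cast; ring
        rw [he] at hzs
        have hps := hφper.intervalIntegral_add_eq (-(n : ℝ)) 0
        rw [hps, zero_add] at hzs
        have hcalc4 : (∫ y in (-(n : ℝ))..(n : ℝ), φ y)
            = 2 * (n : ℝ) * ∫ x in (0 : ℝ)..1, φ x := by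
          rw [hzs, zsmul_eq_mul]; push_cast; ring
        rw [hcalc1, hcalc2, hcalc3, hcalc4]
        have hbig : ε * (2 * (n : ℝ) * ∫ x in (0 : ℝ)..1, φ x) ≤ 4 * η := by
          have h5 : ε * (2 * (n : ℝ) * ∫ x in (0 : ℝ)..1, φ x) ≤ ε * (2 * (n : ℝ)) := by
            have : (0:ℝ) ≤ ε * (2 * (n : ℝ)) := by positivity
            nlinarith
          have h6 : ε * (2 * (n : ℝ)) ≤ 4 * η := by nlinarith
          linarith
        calc (M / η) * (ε * (2 * (n : ℝ) * ∫ x in (0 : ℝ)..1, φ x))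
            ≤ (M / η) * (4 * η) := by
              have : (0:ℝ) ≤ M / η := by positivity
              nlinarith
          _ = 4 * M := by field_simp
end

section
/- For each m ∈ ℕ and k ∈ [−1/2, 1/2], let ψ_m(x,k) be complex-valued, jointly measurable in (x,k), 1-periodic in x, and such that for each fixed k the family (ψ_m(·,k))_{m∈ℕ} is an orthonormal Hilbert basis of L²(0,1). Let h ∈ L²(ℝ) have compact support. Define c_m(k) := ∫_ℝ h(x) conj(ψ_m(x,k)) e^{−2πikx} dx. Then ∑_{m=0}^{∞} ∫_{−1/2}^{1/2} |c_m(k)|² dk = ∫_ℝ |h(x)|² dx. -/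
open MeasureTheory

open MeasureTheory intervalIntegral
open scoped ENNReal NNReal

private lemma aux_shift_integrableOn {E : Type*} [NormedAddCommGroup E]
    {f : ℝ → E} (c : ℝ) (hf : IntegrableOn (fun x => f (x + c)) (Set.Ioc (0:ℝ) 1) volume) :
    IntegrableOn f (Set.Ioc c (c+1)) volume := by
  have h1 : IntervalIntegrable (fun x => f (x + c)) volume 0 1 :=
    (intervalIntegrable_iff_integrableOn_Ioc_of_le zero_le_one).2 hf
  have h2 := h1.comp_sub_right c
  simp only [sub_add_cancel] at h2
  have h3 : IntervalIntegrable f volume c (1 + c) := by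
    simpa [zero_add] using h2
  have := (intervalIntegrable_iff_integrableOn_Ioc_of_le (by linarith : c ≤ 1 + c)).1 h3
  simpa [add_comm] using this

private lemma aux_Ioc_subset (b : ℝ) (J : ℕ) :
    Set.Ioc b (b + (J:ℝ)) ⊆ ⋃ i ∈ Finset.range J, Set.Ioc (b + (i:ℝ)) (b + (i:ℝ) + 1) := by
  induction J with
  | zero => simp
  | succ J ih =>
      intro x hx
      rcases le_or_gt x (b + (J:ℝ)) with hle | hlt
      · have : x ∈ Set.Ioc b (b + (J:ℝ)) := ⟨hx.1, hle⟩
        have := ih this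
        simp only [Set.mem_iUnion, Finset.mem_range] at this ⊢
        obtain ⟨i, hi, hxi⟩ := this
        exact ⟨i, Nat.lt_succ_of_lt hi, hxi⟩
      · simp only [Set.mem_iUnion, Finset.mem_range]
        refine ⟨J, Nat.lt_succ_self J, hlt, ?_⟩
        have := hx.2
        push_cast at this ⊢
        linarith

private lemma mul_memℒp2_integrable {μ : Measure ℝ} {f g : ℝ → ℂ}
    (hf : MemLp f 2 μ) (hg : MemLp g 2 μ) : Integrable (fun x => f x * g x) μ := by
  rw [← memLp_one_iff_integrable]
  have : MemLp (f • g) 1 μ := hg.smul (φ := f) hf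
  exact this

private lemma memℒp_shift {f : ℝ → ℂ} (hf : MemLp f 2 volume) (c : ℝ) :
    MemLp (fun x => f (x + c)) 2 volume :=
  hf.comp_measurePreserving (measurePreserving_add_right volume c)

private lemma memℒp_conj {μ : Measure ℝ} {f : ℝ → ℂ} (hf : MemLp f 2 μ) :
    MemLp (fun x => (starRingEnd ℂ) (f x)) 2 μ :=
  MemLp.of_le hf (RCLike.continuous_conj.comp_aestronglyMeasurable hf.1)
    (Filter.Eventually.of_forall fun x => by simp)

private lemma enorm1 (k x : ℝ) : ‖Complex.exp (-(2 * Real.pi * Complex.I * k * x))‖ = 1 := by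
  have : -(2 * Real.pi * Complex.I * k * x) = ((-(2 * Real.pi * k * x) : ℝ) : ℂ) * Complex.I := by
    push_cast; ring
  rw [this]
  exact Complex.norm_exp_ofReal_mul_I _

private lemma re_integral_conj_mul {μ : Measure ℝ} {f : ℝ → ℂ}
    (hf : Integrable (fun x => (starRingEnd ℂ) (f x) * f x) μ) :
    (∫ x, (starRingEnd ℂ) (f x) * f x ∂μ).re = ∫ x, ‖f x‖^2 ∂μ := by
  rw [show (∫ x, (starRingEnd ℂ) (f x) * f x ∂μ).re
    = RCLike.re (∫ x, (starRingEnd ℂ) (f x) * f x ∂μ) from rfl, ← integral_re hf]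
  refine MeasureTheory.integral_congr_ae (Filter.Eventually.of_forall fun x => ?_)
  show RCLike.re ((starRingEnd ℂ) (f x) * f x) = ‖f x‖^2
  rw [RCLike.re_to_complex, mul_comm, Complex.mul_conj, Complex.ofReal_re,
    Complex.normSq_eq_norm_sq]

private lemma aux_split {E : Type*} [NormedAddCommGroup E] [NormedSpace ℝ E]
    (f : ℝ → E) (hf : Integrable f volume) (b : ℝ) (J : ℕ)
    (hsupp : ∀ x : ℝ, x ∉ Set.Ioc b (b + (J : ℝ)) → f x = 0) :
    ∫ x, f x = ∑ i ∈ Finset.range J, ∫ x in Set.Ioc (0:ℝ) 1, f (x + (b + (i : ℝ))) := by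
  have h1 : ∫ x, f x = ∫ x in Set.Ioc b (b + (J:ℝ)), f x :=
    (setIntegral_eq_integral_of_forall_compl_eq_zero hsupp).symm
  have hle : b ≤ b + (J:ℝ) := by
    have : (0:ℝ) ≤ (J:ℝ) := Nat.cast_nonneg J
    linarith
  have h3 : ∑ i ∈ Finset.range J, ∫ x in (b+(i:ℝ))..(b+(i:ℝ)+1), f x
      = ∫ x in b..(b+(J:ℝ)), f x := by
    have := intervalIntegral.sum_integral_adjacent_intervals
      (a := fun i : ℕ => b + (i:ℝ)) (n := J) (μ := volume) (f := f)
      (fun i _ => (hf.integrableOn).intervalIntegrable)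
    simpa [add_assoc] using this
  rw [h1, ← intervalIntegral.integral_of_le hle, ← h3]
  refine Finset.sum_congr rfl fun i _ => ?_
  have h4 : ∫ x in (0:ℝ)..1, f (x + (b + (i:ℝ))) = ∫ x in (b+(i:ℝ))..(b+(i:ℝ)+1), f x := by
    rw [intervalIntegral.integral_comp_add_right f (b + (i:ℝ))]
    norm_num [add_comm]
  rw [← h4, intervalIntegral.integral_of_le (zero_le_one)]
/-- **Parseval identity for the Bloch (Floquet–Zak) decomposition.**
If for each quasimomentum `k` the 1-periodic functions `(ψ_m(·,k))_m` form an
orthonormal Hilbert basis of `L²(0,1)` (jointly measurably in `(x,k)`), and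
`h ∈ L²(ℝ)` has compact support, then the Bloch coefficients
`c_m(k) = ∫ h(x) conj(ψ_m(x,k)) e^{-2πikx} dx` satisfy
`∑_m ∫_{-1/2}^{1/2} |c_m(k)|² dk = ∫ |h|²`. -/
theorem stmt_13
    (ψ : ℕ → ℝ → ℝ → ℂ)
    (hmeas : ∀ m : ℕ, Measurable fun z : ℝ × ℝ => ψ m z.1 z.2)
    (hper : ∀ m : ℕ, ∀ x k : ℝ, ψ m (x + 1) k = ψ m x k)
    (B : ℝ → HilbertBasis ℕ ℂ (Lp ℂ 2 μ01))
    (hB : ∀ k : ℝ, ∀ m : ℕ, ⇑(B k m) =ᵐ[μ01] fun x => ψ m x k)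
    (h : ℝ → ℂ) (hh : MemLp h 2 volume) (hhsupp : HasCompactSupport h)
    (c : ℕ → ℝ → ℂ)
    (hc : ∀ m : ℕ, ∀ k : ℝ, c m k =
      ∫ x : ℝ, h x * starRingEnd ℂ (ψ m x k) *
        Complex.exp (-(2 * Real.pi * Complex.I * k * x))) :
    ∑' m : ℕ, ∫ k in (-(1 : ℝ) / 2)..(1 / 2), ‖c m k‖ ^ 2 =
      ∫ x : ℝ, ‖h x‖ ^ 2 := by
  classical
  -- bounded support
  obtain ⟨R, hR⟩ : ∃ R : ℝ, tsupport h ⊆ Metric.closedBall 0 R :=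
    hhsupp.isBounded.subset_closedBall 0
  set M : ℕ := ⌈R⌉₊ with hM
  set b : ℝ := -((M : ℝ) + 1) with hbdef
  set J : ℕ := 2 * M + 2 with hJdef
  have hbJ : b + (J : ℝ) = (M : ℝ) + 1 := by rw [hbdef, hJdef]; push_cast; ring
  have hsupp0 : ∀ x : ℝ, x ∉ Set.Ioc b (b + (J : ℝ)) → h x = 0 := by
    intro x hx
    by_contra hx0
    have hxt : x ∈ tsupport h := subset_tsupport h hx0
    have : |x| ≤ R := by simpa [Real.dist_eq] using hR hxt
    have hRM : R ≤ (M : ℝ) := Nat.le_ceil R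
    have h1 : -((M:ℝ)) ≤ x := by have := abs_le.1 this; linarith
    have h2 : x ≤ (M:ℝ) := by have := abs_le.1 this; linarith
    exact hx ⟨by rw [hbdef]; linarith, by rw [hbJ]; linarith⟩
  set h' : ℝ → ℂ := (Set.Ioc b (b + (J : ℝ))).indicator (hh.1.mk h) with hh'def
  have hmeas_h' : Measurable h' :=
    (hh.1.stronglyMeasurable_mk.measurable).indicator measurableSet_Ioc
  have hae : h =ᵐ[volume] h' := by
    filter_upwards [hh.1.ae_eq_mk] with x hx
    by_cases hxs : x ∈ Set.Ioc b (b + (J : ℝ))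
    · rw [hh'def, Set.indicator_of_mem hxs, ← hx]
    · rw [hh'def, Set.indicator_of_notMem hxs, hsupp0 x hxs]
  have hsupp' : ∀ x : ℝ, x ∉ Set.Ioc b (b + (J : ℝ)) → h' x = 0 := fun x hx =>
    Set.indicator_of_notMem hx _
  have hh' : MemLp h' 2 volume := hh.ae_eq hae
  set τ : ℕ → ℝ := fun i => b + (i : ℝ) with hτdef
  have hτint : ∀ i : ℕ, ∃ n : ℤ, (n : ℝ) = τ i := fun i =>
    ⟨(i : ℤ) - ((M : ℤ) + 1), by rw [hτdef, hbdef]; push_cast; ring⟩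
  have hψper : ∀ (m : ℕ) (x k : ℝ) (n : ℤ), ψ m (x + (n : ℝ)) k = ψ m x k := by
    intro m x k n
    have hp : Function.Periodic (fun x => ψ m x k) 1 := fun y => hper m y k
    simpa using (hp.int_mul n) x
  have hψ2 : ∀ (m : ℕ) (x k : ℝ) (i : ℕ), ψ m (x + τ i) k = ψ m x k := by
    intro m x k i
    obtain ⟨n, hn⟩ := hτint i
    rw [← hn, hψper]
  set E2 : ℝ → ℝ → ℂ := fun k x => Complex.exp (-(2 * Real.pi * Complex.I * k * x)) with hE2def
  have hE2norm : ∀ k x : ℝ, ‖E2 k x‖ = 1 := fun k x => enorm1 k x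
  have hψmem : ∀ (k : ℝ) (m : ℕ), MemLp (fun x => ψ m x k) 2 μ01 := fun k m =>
    (Lp.memLp (B k m)).ae_eq (hB k m)
  have hψmeas : ∀ (k : ℝ) (m : ℕ), Measurable (fun x => ψ m x k) := fun k m =>
    (hmeas m).comp (measurable_id.prodMk measurable_const)
  have hshiftmem : ∀ (k : ℝ) (i : ℕ), MemLp (fun x => h' (x + τ i) * E2 k (x + τ i)) 2 volume := by
    intro k i
    refine MemLp.of_le (memℒp_shift hh' (τ i)) ?_ (Filter.Eventually.of_forall fun x => ?_)
    · exact ((hmeas_h'.comp (measurable_add_const (τ i))).aestronglyMeasurable).mul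
        ((Complex.continuous_exp.comp (by fun_prop)).aestronglyMeasurable)
    · rw [norm_mul, hE2norm, mul_one]
  set g : ℝ → ℝ → ℂ := fun k x => ∑ i ∈ Finset.range J, h' (x + τ i) * E2 k (x + τ i) with hgdef
  have hgmem : ∀ k : ℝ, MemLp (g k) 2 μ01 :=
    fun k => memLp_finset_sum _ (fun i _ => ((hshiftmem k i).restrict _))
  have hμ01 : μ01 = volume.restrict (Set.Ioc (0:ℝ) 1) := rfl
  haveI : SFinite μ01 := inferInstanceAs (SFinite (volume.restrict (Set.Ioc (0:ℝ) 1)))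
  set F : ℕ → ℝ → ℝ → ℂ := fun m k x =>
    h' x * (starRingEnd ℂ) (ψ m x k) * E2 k x with hFdef
  have hFshift : ∀ (m : ℕ) (k : ℝ) (i : ℕ) (x : ℝ),
      F m k (x + τ i) = (starRingEnd ℂ) (ψ m x k) * (h' (x + τ i) * E2 k (x + τ i)) := by
    intro m k i x
    simp only [hFdef]
    rw [hψ2 m x k i]
    ring
  have hFsupp : ∀ (m : ℕ) (k : ℝ) (x : ℝ), x ∉ Set.Ioc b (b + (J:ℝ)) → F m k x = 0 := by
    intro m k x hx; simp only [hFdef]; rw [hsupp' x hx]; ring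
  have hFintOn : ∀ (m : ℕ) (k : ℝ) (i : ℕ),
      IntegrableOn (fun x => F m k (x + τ i)) (Set.Ioc (0:ℝ) 1) volume := by
    intro m k i
    have heq : (fun x => F m k (x + τ i)) =
        fun x => (starRingEnd ℂ) (ψ m x k) * (h' (x + τ i) * E2 k (x + τ i)) :=
      funext fun x => hFshift m k i x
    rw [heq]
    exact mul_memℒp2_integrable (memℒp_conj (hψmem k m)) ((hshiftmem k i).restrict _)
  have hFint : ∀ (m : ℕ) (k : ℝ), Integrable (F m k) volume := by
    intro m k
    have h1 : IntegrableOn (F m k)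
        (⋃ i ∈ Finset.range J, Set.Ioc (b + (i:ℝ)) (b + (i:ℝ) + 1)) volume := by
      rw [integrableOn_finset_iUnion]
      exact fun i _ => aux_shift_integrableOn (b + (i:ℝ)) (hFintOn m k i)
    have h2 : IntegrableOn (F m k) (Set.Ioc b (b + (J:ℝ))) volume :=
      h1.mono_set (aux_Ioc_subset b J)
    rw [← integrableOn_iff_integrable_of_support_subset
      (Function.support_subset_iff'.2 (hFsupp m k))]
    exact h2
  have hcI : ∀ (m : ℕ) (k : ℝ), c m k = ∑ i ∈ Finset.range J,
      ∫ x in Set.Ioc (0:ℝ) 1, F m k (x + τ i) := by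
    intro m k
    have h0 : c m k = ∫ x, F m k x := by
      rw [hc m k]
      refine integral_congr_ae ?_
      filter_upwards [hae] with x hx
      simp only [hFdef, hE2def]
      rw [hx]
    rw [h0]
    exact aux_split (F m k) (hFint m k) b J (hFsupp m k)
  have hinner : ∀ (k : ℝ) (m : ℕ),
      (inner ℂ ((B k) m) ((hgmem k).toLp (g k)) : ℂ) = c m k := by
    intro k m
    rw [L2.inner_def]
    have hcongr : (fun x => (inner ℂ (((B k) m : Lp ℂ 2 μ01) x)
          (((hgmem k).toLp (g k) : Lp ℂ 2 μ01) x) : ℂ))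
        =ᵐ[μ01] fun x => (starRingEnd ℂ) (ψ m x k) * g k x := by
      filter_upwards [hB k m, (hgmem k).coeFn_toLp] with x h1 h2
      rw [h1, h2, RCLike.inner_apply, mul_comm]
    rw [integral_congr_ae hcongr]
    calc ∫ x, (starRingEnd ℂ) (ψ m x k) * g k x ∂μ01
        = ∑ i ∈ Finset.range J,
            ∫ x, (starRingEnd ℂ) (ψ m x k) * (h' (x + τ i) * E2 k (x + τ i)) ∂μ01 := by
          simp_rw [hgdef, Finset.mul_sum]
          exact integral_finset_sum _ (fun i _ =>
            mul_memℒp2_integrable (memℒp_conj (hψmem k m)) ((hshiftmem k i).restrict _))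
      _ = ∑ i ∈ Finset.range J, ∫ x in Set.Ioc (0:ℝ) 1, F m k (x + τ i) := by
          refine Finset.sum_congr rfl fun i _ => ?_
          rw [hμ01]
          exact integral_congr_ae (Filter.Eventually.of_forall fun x => (hFshift m k i x).symm)
      _ = c m k := (hcI m k).symm
  set P : ℝ → ℝ := fun k => ∫ x, ‖g k x‖^2 ∂μ01 with hPdef
  have hgg_int : ∀ k, Integrable (fun x => (starRingEnd ℂ) (g k x) * g k x) μ01 :=
    fun k => mul_memℒp2_integrable (memℒp_conj (hgmem k)) (hgmem k)
  have hre_gg : ∀ z : ℂ, ((starRingEnd ℂ) z * z).re = ‖z‖^2 := by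
    intro z
    rw [mul_comm, Complex.mul_conj, Complex.ofReal_re, Complex.normSq_eq_norm_sq]
  have hPar : ∀ k : ℝ, HasSum (fun m => ‖c m k‖^2) (P k) := by
    intro k
    set fk := (hgmem k).toLp (g k) with hfk
    have hs := (B k).hasSum_inner_mul_inner fk fk
    have ht : ∀ m : ℕ, (inner ℂ fk ((B k) m) : ℂ) * (inner ℂ ((B k) m) fk : ℂ)
        = ((‖c m k‖^2 : ℝ) : ℂ) := by
      intro m
      rw [← inner_conj_symm fk ((B k) m), hinner k m, mul_comm, Complex.mul_conj]
      norm_cast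
      rw [Complex.normSq_eq_norm_sq]
    simp only [ht] at hs
    have hre := Complex.reCLM.hasSum hs
    simp only [Complex.reCLM_apply, Complex.ofReal_re] at hre
    have h2 : (inner ℂ fk fk : ℂ) = ∫ x, (starRingEnd ℂ) (g k x) * g k x ∂μ01 := by
      rw [L2.inner_def]
      refine integral_congr_ae ?_
      filter_upwards [(hgmem k).coeFn_toLp] with x hx
      rw [hx, RCLike.inner_apply, mul_comm]
    have h3 : (inner ℂ fk fk : ℂ).re = P k := by
      rw [h2]
      rw [show (∫ x, (starRingEnd ℂ) (g k x) * g k x ∂μ01).re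
        = RCLike.re (∫ x, (starRingEnd ℂ) (g k x) * g k x ∂μ01) from rfl]
      rw [← integral_re (hgg_int k)]
      simp only [hPdef, RCLike.re_to_complex]
      exact integral_congr_ae (Filter.Eventually.of_forall fun x => hre_gg (g k x))
    rwa [h3] at hre
  have hgmeasJ : Measurable fun z : ℝ × ℝ => g z.1 z.2 := by
    simp only [hgdef, hE2def]
    refine Finset.measurable_sum _ fun i _ => ?_
    exact (hmeas_h'.comp (measurable_snd.add_const (τ i))).mul (by fun_prop)
  have hcmeas : ∀ m : ℕ, StronglyMeasurable fun k => c m k := by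
    intro m
    have hFm : StronglyMeasurable fun z : ℝ × ℝ => F m z.1 z.2 := by
      simp only [hFdef]
      apply Measurable.stronglyMeasurable
      exact ((hmeas_h'.comp measurable_snd).mul
        (RCLike.continuous_conj.measurable.comp ((hmeas m).comp measurable_swap))).mul
        (by fun_prop : Measurable fun z : ℝ × ℝ =>
          Complex.exp (-(2 * Real.pi * Complex.I * z.1 * z.2)))
    have h1 := hFm.integral_prod_right' (ν := volume)
    have heq : (fun k => c m k) = fun k => ∫ x, F m k x := funext fun k => by
      rw [hc m k]
      exact integral_congr_ae (by
        filter_upwards [hae] with x hx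
        simp only [hFdef, hE2def]
        rw [hx])
    rw [heq]; exact h1
  set H : ℝ → ℝ := fun x => ∑ i ∈ Finset.range J, ‖h' (x + τ i)‖ with hHdef
  have hHmem : MemLp H 2 μ01 :=
    memLp_finset_sum _ (fun i _ => ((memℒp_shift hh' (τ i)).restrict _).norm)
  set C : ℝ := ∫ x, H x ^ 2 ∂μ01 with hCdef
  have hgleH : ∀ k x : ℝ, ‖g k x‖ ≤ H x := by
    intro k x
    simp only [hgdef, hHdef]
    refine (norm_sum_le _ _).trans ?_
    refine Finset.sum_le_sum fun i _ => ?_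
    rw [norm_mul, hE2norm, mul_one]
  have hgsq_int : ∀ k : ℝ, Integrable (fun x => ‖g k x‖^2) μ01 :=
    fun k => ((hgmem k).norm).integrable_sq
  have hHsq_int : Integrable (fun x => H x ^ 2) μ01 := hHmem.integrable_sq
  have hPleC : ∀ k : ℝ, P k ≤ C := by
    intro k
    simp only [hPdef, hCdef]
    refine integral_mono (hgsq_int k) hHsq_int fun x => ?_
    have h1 := hgleH k x
    have h0 : (0:ℝ) ≤ ‖g k x‖ := norm_nonneg _
    nlinarith
  set I : Set ℝ := Set.Ioc (-(1:ℝ)/2) (1/2) with hIdef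
  have hIle : (-(1:ℝ)/2) ≤ 1/2 := by norm_num
  have hswap : (∑' m : ℕ, ∫ k in I, ‖c m k‖^2) = ∫ k in I, P k := by
    have hptw : ∀ k : ℝ, (∑' m : ℕ, (nnnorm (‖c m k‖^2) : ℝ≥0∞)) = ENNReal.ofReal (P k) := by
      intro k
      have h4 : ∀ m : ℕ, (nnnorm (‖c m k‖^2) : ℝ≥0∞) = ENNReal.ofReal (‖c m k‖^2) :=
        fun m => Real.enorm_eq_ofReal (by positivity)
      simp_rw [h4]
      rw [← ENNReal.ofReal_tsum_of_nonneg (fun m => by positivity) (hPar k).summable,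
        (hPar k).tsum_eq]
    have hbound : (∑' m : ℕ, ∫⁻ k in I, (nnnorm (‖c m k‖^2) : ℝ≥0∞)) ≠ ⊤ := by
      show (∑' m : ℕ, ∫⁻ k in I, ‖‖c m k‖^2‖ₑ) ≠ ⊤
      rw [← lintegral_tsum (fun m =>
        (((hcmeas m).measurable.norm.pow_const 2).enorm).aemeasurable)]
      refine ne_of_lt ?_
      calc ∫⁻ k in I, ∑' m : ℕ, (nnnorm (‖c m k‖^2) : ℝ≥0∞)
          = ∫⁻ k in I, ENNReal.ofReal (P k) := by
            exact lintegral_congr fun k => hptw k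
        _ ≤ ∫⁻ _k in I, ENNReal.ofReal C := lintegral_mono fun k =>
            ENNReal.ofReal_le_ofReal (hPleC k)
        _ = ENNReal.ofReal C * volume I := setLIntegral_const I _
        _ < ⊤ := ENNReal.mul_lt_top ENNReal.ofReal_lt_top
            (by rw [hIdef, Real.volume_Ioc]; exact ENNReal.ofReal_lt_top)
    have h1 := integral_tsum (μ := volume.restrict I)
      (f := fun m k => (‖c m k‖^2 : ℝ))
      (fun m => ((hcmeas m).measurable.norm.pow_const 2).aestronglyMeasurable) hbound
    rw [← h1]
    exact integral_congr_ae (Filter.Eventually.of_forall fun k => (hPar k).tsum_eq)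
  have hEE : ∀ (k y y' : ℝ), (starRingEnd ℂ) (E2 k y) * E2 k y'
      = Complex.exp ((2*Real.pi*Complex.I*(((y - y' : ℝ)) : ℂ)) * k) := by
    intro k y y'
    simp only [hE2def]
    rw [← Complex.exp_conj, ← Complex.exp_add]
    congr 1
    simp only [map_neg, map_mul, Complex.conj_I, Complex.conj_ofReal, map_ofNat]
    push_cast
    ring
  set Q : ℕ → ℕ → ℂ := fun i i' => ∫ x, (starRingEnd ℂ) (h' (x + τ i)) * h' (x + τ i') ∂μ01
    with hQdef
  have hQint : ∀ i i' : ℕ, Integrable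
      (fun x => (starRingEnd ℂ) (h' (x + τ i)) * h' (x + τ i')) μ01 := fun i i' =>
    mul_memℒp2_integrable (memℒp_conj ((memℒp_shift hh' (τ i)).restrict _))
      ((memℒp_shift hh' (τ i')).restrict _)
  have hgg_expand : ∀ (k x : ℝ), (starRingEnd ℂ) (g k x) * g k x
      = ∑ i ∈ Finset.range J, ∑ i' ∈ Finset.range J,
          Complex.exp ((2*Real.pi*Complex.I*(((τ i - τ i' : ℝ)) : ℂ)) * k)
            * ((starRingEnd ℂ) (h' (x + τ i)) * h' (x + τ i')) := by
    intro k x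
    simp only [hgdef]
    rw [map_sum, Finset.sum_mul_sum]
    refine Finset.sum_congr rfl fun i _ => Finset.sum_congr rfl fun i' _ => ?_
    rw [map_mul]
    have hthis := hEE k (x + τ i) (x + τ i')
    have harg : (x + τ i) - (x + τ i') = τ i - τ i' := by ring
    rw [harg] at hthis
    calc (starRingEnd ℂ) (h' (x + τ i)) * (starRingEnd ℂ) (E2 k (x + τ i))
          * (h' (x + τ i') * E2 k (x + τ i'))
        = ((starRingEnd ℂ) (E2 k (x + τ i)) * E2 k (x + τ i'))
            * ((starRingEnd ℂ) (h' (x + τ i)) * h' (x + τ i')) := by ring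
      _ = _ := by rw [hthis]
  have hPc : ∀ k : ℝ, (∫ x, (starRingEnd ℂ) (g k x) * g k x ∂μ01)
      = ∑ i ∈ Finset.range J, ∑ i' ∈ Finset.range J,
          Complex.exp ((2*Real.pi*Complex.I*(((τ i - τ i' : ℝ)) : ℂ)) * k) * Q i i' := by
    intro k
    rw [integral_congr_ae (Filter.Eventually.of_forall fun x => hgg_expand k x)]
    rw [integral_finset_sum _ (fun i _ => integrable_finset_sum _ (fun i' _ =>
      ((hQint i i').const_mul _)))]
    refine Finset.sum_congr rfl fun i _ => ?_
    rw [integral_finset_sum _ (fun i' _ => (hQint i i').const_mul _)]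
    exact Finset.sum_congr rfl fun i' _ => MeasureTheory.integral_const_mul _ _
  have hPre : ∀ k : ℝ, P k = (∫ x, (starRingEnd ℂ) (g k x) * g k x ∂μ01).re := by
    intro k
    simp only [hPdef]
    exact (re_integral_conj_mul (hgg_int k)).symm
  have hPc_meas : AEStronglyMeasurable (fun k => ∫ x, (starRingEnd ℂ) (g k x) * g k x ∂μ01)
      (volume.restrict I) := by
    have hsm : StronglyMeasurable fun z : ℝ × ℝ => (starRingEnd ℂ) (g z.1 z.2) * g z.1 z.2 :=
      ((RCLike.continuous_conj.measurable.comp hgmeasJ).mul hgmeasJ).stronglyMeasurable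
    exact (hsm.integral_prod_right' (ν := μ01)).aestronglyMeasurable.restrict
  have hPc_int : Integrable (fun k => ∫ x, (starRingEnd ℂ) (g k x) * g k x ∂μ01)
      (volume.restrict I) := by
    have hCint : Integrable (fun _ : ℝ => C) (volume.restrict I) :=
      integrableOn_const (by rw [hIdef, Real.volume_Ioc]; exact ENNReal.ofReal_ne_top)
    refine hCint.mono' hPc_meas (Filter.Eventually.of_forall fun k => ?_)
    calc ‖∫ x, (starRingEnd ℂ) (g k x) * g k x ∂μ01‖
          ≤ ∫ x, ‖(starRingEnd ℂ) (g k x) * g k x‖ ∂μ01 := norm_integral_le_integral_norm _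
        _ = P k := by
            simp only [hPdef]
            refine MeasureTheory.integral_congr_ae (Filter.Eventually.of_forall fun x => ?_)
            show ‖(starRingEnd ℂ) (g k x) * g k x‖ = ‖g k x‖^2
            rw [norm_mul, RCLike.norm_conj, pow_two]
        _ ≤ C := hPleC k
  have hIint : ∀ cc : ℂ, Integrable (fun k : ℝ => Complex.exp (cc * k)) (volume.restrict I) := by
    intro cc
    exact (Complex.continuous_exp.comp (continuous_const.mul Complex.continuous_ofReal)).integrableOn_Ioc
  have hdelta : ∀ i i' : ℕ,
      (∫ k in I, Complex.exp ((2*Real.pi*Complex.I*(((τ i - τ i' : ℝ)) : ℂ)) * k))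
        = if i = i' then 1 else 0 := by
    intro i i'
    by_cases hii : i = i'
    · subst hii
      simp only [sub_self, Complex.ofReal_zero, mul_zero, zero_mul, Complex.exp_zero, if_pos rfl]
      rw [setIntegral_const, hIdef, Real.volume_real_Ioc]
      norm_num
    · rw [if_neg hii]
      have hd : ((τ i - τ i' : ℝ) : ℂ) = (((i : ℤ) - (i' : ℤ) : ℤ) : ℂ) := by
        simp only [hτdef]; push_cast; ring
      set d : ℤ := (i : ℤ) - (i' : ℤ) with hddef
      have hdne : (d : ℂ) ≠ 0 := by
        rw [Int.cast_ne_zero, hddef, sub_ne_zero]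
        exact_mod_cast hii
      have hcc : (2*(Real.pi:ℂ)*Complex.I*(d:ℂ)) ≠ 0 := by
        refine mul_ne_zero (mul_ne_zero (mul_ne_zero two_ne_zero ?_) Complex.I_ne_zero) hdne
        exact_mod_cast Real.pi_ne_zero
      rw [hd, hIdef, ← intervalIntegral.integral_of_le hIle,
        integral_exp_mul_complex hcc]
      have key : Complex.exp ((2*(Real.pi:ℂ)*Complex.I*(d:ℂ)) * ((1:ℝ):ℂ)/2)
          = Complex.exp ((2*(Real.pi:ℂ)*Complex.I*(d:ℂ)) * ((-(1:ℝ)/2 : ℝ):ℂ)) := by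
        rw [show (2*(Real.pi:ℂ)*Complex.I*(d:ℂ)) * ((1:ℝ):ℂ)/2
          = (2*(Real.pi:ℂ)*Complex.I*(d:ℂ)) * ((-(1:ℝ)/2 : ℝ):ℂ) + (d:ℂ)*(2*(Real.pi:ℂ)*Complex.I) by push_cast; ring]
        rw [Complex.exp_add, Complex.exp_int_mul_two_pi_mul_I, mul_one]
      rw [show ((2:ℂ)*(Real.pi:ℂ)*Complex.I*(d:ℂ)) * ((1/2 : ℝ):ℂ)
          = (2*(Real.pi:ℂ)*Complex.I*(d:ℂ)) * ((1:ℝ):ℂ)/2 by push_cast; ring]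
      rw [key, sub_self, zero_div]
  have hPcI : (∫ k in I, ∫ x, (starRingEnd ℂ) (g k x) * g k x ∂μ01)
      = ∑ i ∈ Finset.range J, Q i i := by
    calc ∫ k in I, ∫ x, (starRingEnd ℂ) (g k x) * g k x ∂μ01
        = ∫ k in I, ∑ i ∈ Finset.range J, ∑ i' ∈ Finset.range J,
            Complex.exp ((2*Real.pi*Complex.I*(((τ i - τ i' : ℝ)) : ℂ)) * k) * Q i i' :=
          integral_congr_ae (Filter.Eventually.of_forall fun k => hPc k)
      _ = ∑ i ∈ Finset.range J, ∑ i' ∈ Finset.range J,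
            ∫ k in I, Complex.exp ((2*Real.pi*Complex.I*(((τ i - τ i' : ℝ)) : ℂ)) * k) * Q i i' := by
          rw [integral_finset_sum _ (fun i _ => integrable_finset_sum _ (fun i' _ =>
            (hIint _).mul_const _))]
          exact Finset.sum_congr rfl fun i _ =>
            integral_finset_sum _ (fun i' _ => (hIint _).mul_const _)
      _ = ∑ i ∈ Finset.range J, ∑ i' ∈ Finset.range J,
            (∫ k in I, Complex.exp ((2*Real.pi*Complex.I*(((τ i - τ i' : ℝ)) : ℂ)) * k)) * Q i i' :=
          Finset.sum_congr rfl fun i _ => Finset.sum_congr rfl fun i' _ =>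
            MeasureTheory.integral_mul_const _ _
      _ = ∑ i ∈ Finset.range J, Q i i := by
          refine Finset.sum_congr rfl fun i hi => ?_
          rw [Finset.sum_congr rfl (fun i' _ => by rw [hdelta i i'])]
          simp [Finset.mem_range.1 hi]
  have hQre : ∀ i : ℕ, (Q i i).re = ∫ x, ‖h' (x + τ i)‖^2 ∂μ01 := by
    intro i
    simp only [hQdef]
    exact re_integral_conj_mul (hQint i i)
  have hsplit2 : (∑ i ∈ Finset.range J, ∫ x, ‖h' (x + τ i)‖^2 ∂μ01) = ∫ x, ‖h' x‖^2 := by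
    have haux := aux_split (fun x => ‖h' x‖^2) (hh'.norm.integrable_sq) b J
      (fun x hx => by show ‖h' x‖^2 = (0:ℝ); rw [hsupp' x hx]; simp)
    simp only [hτdef]
    rw [hμ01]
    exact haux.symm
  have hfinal : ∫ k in I, P k = ∫ x, ‖h' x‖^2 := by
    calc ∫ k in I, P k
        = ∫ k in I, (∫ x, (starRingEnd ℂ) (g k x) * g k x ∂μ01).re :=
          integral_congr_ae (Filter.Eventually.of_forall fun k => hPre k)
      _ = (∫ k in I, ∫ x, (starRingEnd ℂ) (g k x) * g k x ∂μ01).re := by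
          rw [show (∫ k in I, ∫ x, (starRingEnd ℂ) (g k x) * g k x ∂μ01).re
            = RCLike.re (∫ k in I, ∫ x, (starRingEnd ℂ) (g k x) * g k x ∂μ01) from rfl,
            ← integral_re hPc_int]
          simp [RCLike.re_to_complex]
      _ = (∑ i ∈ Finset.range J, Q i i).re := by rw [hPcI]
      _ = ∑ i ∈ Finset.range J, (Q i i).re := Complex.re_sum _ _
      _ = ∑ i ∈ Finset.range J, ∫ x, ‖h' (x + τ i)‖^2 ∂μ01 :=
          Finset.sum_congr rfl fun i _ => hQre i
      _ = ∫ x, ‖h' x‖^2 := hsplit2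
  have hgoal1 : ∀ m : ℕ, (∫ k in (-(1:ℝ)/2)..(1/2), ‖c m k‖^2) = ∫ k in I, ‖c m k‖^2 :=
    fun m => by rw [hIdef]; exact intervalIntegral.integral_of_le hIle
  calc ∑' m : ℕ, ∫ k in (-(1:ℝ)/2)..(1/2), ‖c m k‖^2
      = ∑' m : ℕ, ∫ k in I, ‖c m k‖^2 := tsum_congr hgoal1
    _ = ∫ k in I, P k := hswap
    _ = ∫ x, ‖h' x‖^2 := hfinal
    _ = ∫ x, ‖h x‖^2 :=
      (MeasureTheory.integral_congr_ae (by filter_upwards [hae] with x hx; rw [hx])).symm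
end

section
/- Let K : ℝ → ℝ be continuously differentiable with support contained in [−1,1], a : ℝ → ℝ be 1-periodic and continuously differentiable, ψ : ℝ → ℂ be 1-periodic and continuously differentiable, k ∈ ℝ, and ε, η > 0 with α := ε/η. Define h(x,α) := −α² K′(αx) a(x) − α K(αx) a′(x). Then h(·,α) is continuous with support contained in [−1/α, 1/α], and ε ∫_ℝ K_η(x) a(x/ε) ∂_x[ ψ(x/ε) e^{ikx/ε} ] dx = ∫_ℝ h(x,α) ψ(x) e^{ikx} dx. Moreover, if α ≤ 1 then ∫_ℝ |h(x,α)|² dx ≤ C (1+α)², where C depends only on K and a. -/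
open MeasureTheory Function Set


lemma per_bound {f : ℝ → ℝ} (hf : Continuous f) (hp : Function.Periodic f 1) :
    ∃ C : ℝ, 0 ≤ C ∧ ∀ x, |f x| ≤ C := by
  obtain ⟨C, hC⟩ := isCompact_Icc.exists_bound_of_continuousOn
    (s := Set.Icc (0:ℝ) 1) hf.continuousOn
  refine ⟨max C 0, le_max_right _ _, fun x => ?_⟩
  obtain ⟨y, hy, hxy⟩ := hp.exists_mem_Ico₀ one_pos x
  rw [hxy]
  exact le_trans (by simpa [Real.norm_eq_abs] using hC y ⟨hy.1, hy.2.le⟩) (le_max_left _ _)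

lemma derivK_zero {K : ℝ → ℝ} (hKsupp : Function.support K ⊆ Set.Icc (-1:ℝ) 1)
    {z : ℝ} (hz : z ∉ Set.Icc (-1:ℝ) 1) : deriv K z = 0 := by
  have hopen : IsOpen (Set.Icc (-1:ℝ) 1)ᶜ := isClosed_Icc.isOpen_compl
  have hev : K =ᶠ[nhds z] fun _ => (0:ℝ) := by
    filter_upwards [hopen.mem_nhds hz] with w hw
    by_contra h0
    exact hw (hKsupp h0)
  rw [hev.deriv_eq]; simp

lemma K_zero {K : ℝ → ℝ} (hKsupp : Function.support K ⊆ Set.Icc (-1:ℝ) 1)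
    {z : ℝ} (hz : z ∉ Set.Icc (-1:ℝ) 1) : K z = 0 := by
  by_contra h0; exact hz (hKsupp h0)

lemma key_ident (K : ℝ → ℝ) (hK : ContDiff ℝ 1 K)
    (hKsupp : Function.support K ⊆ Set.Icc (-1:ℝ) 1)
    (a : ℝ → ℝ) (ha : ContDiff ℝ 1 a)
    (ε η : ℝ) (hε : 0 < ε) (hη : 0 < η)
    (k : ℝ) (ψ : ℝ → ℂ) (hψ : ContDiff ℝ 1 ψ) :
    (ε : ℂ) * ∫ x : ℝ, ((η⁻¹ * K (x / η) * a (x / ε) : ℝ) : ℂ) *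
        deriv (fun y => ψ (y / ε) * Complex.exp (Complex.I * k * y / ε)) x =
      ∫ x : ℝ, ((-(ε/η)^2 * deriv K ((ε/η) * x) * a x - (ε/η) * K ((ε/η) * x) * deriv a x : ℝ) : ℂ)
        * ψ x * Complex.exp (Complex.I * k * x) := by
  set α : ℝ := ε / η with hαdef
  have hα : 0 < α := div_pos hε hη
  have hεne : (ε : ℝ) ≠ 0 := hε.ne'
  have hηne : (η : ℝ) ≠ 0 := hη.ne'
  -- derivative facts
  have hψd : ∀ y : ℝ, HasDerivAt ψ (deriv ψ y) y :=
    fun y => (hψ.differentiable one_ne_zero y).hasDerivAt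
  have hKd : ∀ y : ℝ, HasDerivAt K (deriv K y) y :=
    fun y => (hK.differentiable one_ne_zero y).hasDerivAt
  have had : ∀ y : ℝ, HasDerivAt a (deriv a y) y :=
    fun y => (ha.differentiable one_ne_zero y).hasDerivAt
  set G : ℝ → ℂ := fun y => ψ y * Complex.exp (Complex.I * k * y) with hGdef
  set G' : ℝ → ℂ := fun y => deriv ψ y * Complex.exp (Complex.I * k * y)
      + ψ y * (Complex.exp (Complex.I * k * y) * (Complex.I * k)) with hG'def
  have hGd : ∀ y : ℝ, HasDerivAt G (G' y) y := by
    intro y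
    have h1 : HasDerivAt (fun t : ℝ => Complex.I * k * (t : ℂ)) (Complex.I * k) y := by
      simpa using (Complex.ofRealCLM.hasDerivAt (x := y)).const_mul (Complex.I * k)
    exact (hψd y).mul h1.cexp
  have hψc : Continuous ψ := hψ.continuous
  have hKc : Continuous K := hK.continuous
  have hac : Continuous a := ha.continuous
  have hG'c : Continuous G' := by
    have h1 : Continuous (deriv ψ) := hψ.continuous_deriv le_rfl
    have h2 : Continuous fun y : ℝ => Complex.exp (Complex.I * k * y) :=
      Complex.continuous_exp.comp (continuous_const.mul Complex.continuous_ofReal)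
    fun_prop
  have hGc : Continuous G := by
    have h2 : Continuous fun y : ℝ => Complex.exp (Complex.I * k * y) :=
      Complex.continuous_exp.comp (continuous_const.mul Complex.continuous_ofReal)
    fun_prop
  -- the inner function equals G ∘ (·/ε)
  have hF : (fun y : ℝ => ψ (y / ε) * Complex.exp (Complex.I * k * y / ε))
      = fun y : ℝ => G (y / ε) := by
    funext y
    have : (Complex.I * k * y / ε : ℂ) = Complex.I * k * ((y / ε : ℝ) : ℂ) := by
      push_cast; ring
    rw [hGdef]; dsimp only; rw [this]
  have hFd : ∀ x : ℝ, HasDerivAt (fun y : ℝ => G (y / ε)) ((1/ε : ℝ) • G' (x / ε)) x := by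
    intro x
    have := (hGd (x / ε)).scomp (x := x) ((hasDerivAt_id x).div_const ε)
    simpa [Function.comp_def] using this
  -- rewrite LHS integrand as w (ε⁻¹ * x)
  set w : ℝ → ℂ := fun y => ((η⁻¹ * K (ε * y / η) * a y : ℝ) : ℂ) * ((1/ε : ℝ) • G' y)
    with hwdef
  have hintg : (fun x : ℝ => ((η⁻¹ * K (x / η) * a (x / ε) : ℝ) : ℂ) *
      deriv (fun y => ψ (y / ε) * Complex.exp (Complex.I * k * y / ε)) x)
      = fun x => w (ε⁻¹ * x) := by
    funext x
    rw [hF, (hFd x).deriv, hwdef]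
    have e1 : ε⁻¹ * x = x / ε := inv_mul_eq_div ε x
    have e3 : ε * (x / ε) = x := by field_simp
    dsimp only
    rw [e1, e3]
  -- change of variables
  have hcv : (∫ x : ℝ, w (ε⁻¹ * x)) = (|ε| : ℝ) • ∫ y, w y :=
    MeasureTheory.Measure.integral_comp_inv_mul_left w ε
  set u : ℝ → ℂ := fun y => ((K (α * y) * a y : ℝ) : ℂ) with hudef
  have hw_eq : w = fun y => ((ε⁻¹ * η⁻¹ : ℝ) : ℂ) * (u y * G' y) := by
    funext y
    rw [hwdef, hudef]
    have e3 : ε * y / η = α * y := by rw [hαdef]; ring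
    dsimp only
    rw [e3, Complex.real_smul]
    push_cast
    ring
  have hwint : (∫ y, w y) = ((ε⁻¹ * η⁻¹ : ℝ) : ℂ) * ∫ y, u y * G' y := by
    rw [hw_eq]
    simpa using integral_smul (((ε⁻¹ * η⁻¹ : ℝ) : ℂ)) (fun y => u y * G' y)
  -- collapse constants : LHS = α * ∫ u G'
  have hLHS : (ε : ℂ) * ∫ x : ℝ, ((η⁻¹ * K (x / η) * a (x / ε) : ℝ) : ℂ) *
      deriv (fun y => ψ (y / ε) * Complex.exp (Complex.I * k * y / ε)) x
      = (α : ℂ) * ∫ y, u y * G' y := by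
    have hεc : (ε:ℂ) ≠ 0 := Complex.ofReal_ne_zero.mpr hεne
    have hηc : (η:ℂ) ≠ 0 := Complex.ofReal_ne_zero.mpr hηne
    rw [hintg, hcv, hwint, Complex.real_smul, abs_of_pos hε]
    push_cast [hαdef]
    field_simp
  rw [hLHS]
  -- integration by parts on [-R, R]
  set R : ℝ := 1/α + 1 with hRdef
  have hαR : α * R = 1 + α := by rw [hRdef]; field_simp
  have hR1 : (1:ℝ) / α < R := by rw [hRdef]; linarith
  have hRpos : 0 < R := lt_trans (by positivity) hR1
  set u' : ℝ → ℂ := fun y => ((deriv K (α * y) * α * a y + K (α * y) * deriv a y : ℝ) : ℂ)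
    with hu'def
  have hud : ∀ y : ℝ, HasDerivAt u (u' y) y := by
    intro y
    have h1 : HasDerivAt (fun z : ℝ => K (α * z)) (deriv K (α * y) * α) y := by
      have := (hKd (α * y)).comp y ((hasDerivAt_id y).const_mul α)
      simpa [Function.comp_def] using this
    exact (h1.mul (had y)).ofReal_comp
  have hK'c : Continuous (deriv K) := hK.continuous_deriv le_rfl
  have ha'c : Continuous (deriv a) := ha.continuous_deriv le_rfl
  have hu'c : Continuous u' := by
    rw [hu'def]; fun_prop
  -- support of u
  have husupp : ∀ y : ℝ, y ∉ Set.Ioc (-R) R → u y = 0 := by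
    intro y hy
    rw [hudef]
    have : α * y ∉ Set.Icc (-1:ℝ) 1 := by
      intro hmem
      apply hy
      constructor
      · nlinarith [hmem.1]
      · nlinarith [hmem.2]
    simp [K_zero hKsupp this]
  have hsupp1 : Function.support (fun y => u y * G' y) ⊆ Set.Ioc (-R) R := by
    intro y hy
    by_contra hnot
    exact hy (by simp [husupp y hnot])
  have hstep1 : (∫ y, u y * G' y) = ∫ y in (-R)..R, u y * G' y :=
    (intervalIntegral.integral_eq_integral_of_support_subset hsupp1).symm
  have hibp : (∫ y in (-R)..R, u y * G' y)
      = u R * G R - u (-R) * G (-R) - ∫ y in (-R)..R, u' y * G y := by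
    apply intervalIntegral.integral_mul_deriv_eq_deriv_mul
      (fun x _ => hud x) (fun x _ => hGd x)
      (hu'c.intervalIntegrable _ _) (hG'c.intervalIntegrable _ _)
  have hmemR : (1 + α : ℝ) ∉ Set.Icc (-1:ℝ) 1 := fun hm => absurd hm.2 (by linarith)
  have hmemR' : (-(1 + α) : ℝ) ∉ Set.Icc (-1:ℝ) 1 := fun hm => absurd hm.1 (by linarith)
  have huR : u R = 0 := by
    rw [hudef]; dsimp only; rw [hαR, K_zero hKsupp hmemR]; simp
  have huR' : u (-R) = 0 := by
    rw [hudef]; dsimp only; rw [mul_neg, hαR, K_zero hKsupp hmemR']; simp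
  rw [hstep1, hibp, huR, huR']
  -- now:  α * (0 - 0 - ∫ u' G) = RHS
  have hRHSsupp : Function.support (fun x : ℝ =>
      ((-α^2 * deriv K (α * x) * a x - α * K (α * x) * deriv a x : ℝ) : ℂ)
        * ψ x * Complex.exp (Complex.I * k * x)) ⊆ Set.Ioc (-R) R := by
    intro y hy
    by_contra hnot
    apply hy
    have hmem : α * y ∉ Set.Icc (-1:ℝ) 1 := by
      intro hmem
      apply hnot
      constructor
      · nlinarith [hmem.1]
      · nlinarith [hmem.2]
    simp [K_zero hKsupp hmem, derivK_zero hKsupp hmem]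
  have hstep2 : (∫ x : ℝ, ((-α^2 * deriv K (α * x) * a x - α * K (α * x) * deriv a x : ℝ) : ℂ)
        * ψ x * Complex.exp (Complex.I * k * x))
      = ∫ x in (-R)..R, ((-α^2 * deriv K (α * x) * a x - α * K (α * x) * deriv a x : ℝ) : ℂ)
        * ψ x * Complex.exp (Complex.I * k * x) :=
    (intervalIntegral.integral_eq_integral_of_support_subset hRHSsupp).symm
  rw [hstep2]
  simp only [zero_mul, sub_zero, zero_sub, mul_neg]
  rw [← intervalIntegral.integral_const_mul, ← intervalIntegral.integral_neg]
  apply intervalIntegral.integral_congr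
  intro x _
  rw [hu'def, hGdef]
  dsimp only
  push_cast
  ring

/-- **Rescaled form and `L²` bound of the averaged-flux weight `h(·,α)`.**
With `K` a `C¹` kernel supported in `[-1,1]`, `a` 1-periodic `C¹`, and
`h(x,α) = -α² K'(αx) a(x) - α K(αx) a'(x)`, one has:
(i) for all `ε, η > 0` (with `α = ε/η`), `h(·,α)` is continuous, supported in
`[-1/α, 1/α]`, and for every 1-periodic `C¹` function `ψ` and every `k`,
`ε ∫ K_η(x) a(x/ε) ∂ₓ[ψ(x/ε) e^{ikx/ε}] dx = ∫ h(x,α) ψ(x) e^{ikx} dx`;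
(ii) there is `C > 0` depending only on `K` and `a` such that
`∫ |h(x,α)|² dx ≤ C (1+α)²` whenever `α ≤ 1`. -/
theorem stmt_19
    (K : ℝ → ℝ) (hK : ContDiff ℝ 1 K)
    (hKsupp : Function.support K ⊆ Set.Icc (-1 : ℝ) 1)
    (a : ℝ → ℝ) (ha : ContDiff ℝ 1 a) (haper : ∀ x : ℝ, a (x + 1) = a x)
    (h : ℝ → ℝ → ℝ)
    (hh : ∀ x α : ℝ, h x α = -α ^ 2 * deriv K (α * x) * a x - α * K (α * x) * deriv a x) :
    (∀ ε η : ℝ, 0 < ε → 0 < η →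
      (Continuous fun x => h x (ε / η)) ∧
      (Function.support (fun x => h x (ε / η)) ⊆
        Set.Icc (-(1 / (ε / η))) (1 / (ε / η))) ∧
      (∀ k : ℝ, ∀ ψ : ℝ → ℂ, (∀ x : ℝ, ψ (x + 1) = ψ x) → ContDiff ℝ 1 ψ →
        (ε : ℂ) * ∫ x : ℝ, ((η⁻¹ * K (x / η) * a (x / ε) : ℝ) : ℂ) *
            deriv (fun y => ψ (y / ε) * Complex.exp (Complex.I * k * y / ε)) x =
          ∫ x : ℝ, ((h x (ε / η) : ℝ) : ℂ) * ψ x * Complex.exp (Complex.I * k * x))) ∧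
    ∃ C > (0 : ℝ), ∀ ε η : ℝ, 0 < ε → 0 < η → ε / η ≤ 1 →
      (∫ x : ℝ, h x (ε / η) ^ 2) ≤ C * (1 + ε / η) ^ 2 := by
  have hKc : Continuous K := hK.continuous
  have hac : Continuous a := ha.continuous
  have hK'c : Continuous (deriv K) := hK.continuous_deriv le_rfl
  have ha'c : Continuous (deriv a) := ha.continuous_deriv le_rfl
  have had : ∀ y : ℝ, HasDerivAt a (deriv a y) y :=
    fun y => (ha.differentiable one_ne_zero y).hasDerivAt
  have hcontα : ∀ α : ℝ, Continuous fun x => h x α := by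
    intro α
    simp only [hh]
    fun_prop
  -- membership transfer
  have hmemt : ∀ α : ℝ, 0 < α → ∀ x : ℝ, α * x ∈ Set.Icc (-1 : ℝ) 1 →
      x ∈ Set.Icc (-(1 / α)) (1 / α) := by
    intro α hα x hm
    constructor
    · rw [neg_le]
      rw [le_div_iff₀ hα]
      nlinarith [hm.1]
    · rw [le_div_iff₀ hα]
      nlinarith [hm.2]
  have hzero : ∀ α : ℝ, 0 < α → ∀ x : ℝ, x ∉ Set.Icc (-(1 / α)) (1 / α) → h x α = 0 := by
    intro α hα x hx
    have hm : α * x ∉ Set.Icc (-1 : ℝ) 1 := fun hm => hx (hmemt α hα x hm)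
    rw [hh, K_zero hKsupp hm, derivK_zero hKsupp hm]
    ring
  constructor
  · intro ε η hε hη
    have hα : 0 < ε / η := div_pos hε hη
    refine ⟨hcontα _, ?_, ?_⟩
    · intro x hx
      by_contra hnot
      exact hx (hzero _ hα x hnot)
    · intro k ψ hψper hψ
      have := key_ident K hK hKsupp a ha ε η hε hη k ψ hψ
      rw [this]
      apply integral_congr_ae
      apply Filter.Eventually.of_forall
      intro x
      simp only [hh]
  · -- L² bound
    have hKcs : HasCompactSupport K :=
      HasCompactSupport.intro isCompact_Icc (fun x hx => K_zero hKsupp hx)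
    obtain ⟨M2, hM2⟩ := hKcs.exists_bound_of_continuous hKc
    have hM2n : 0 ≤ M2 := le_trans (norm_nonneg _) (hM2 0)
    obtain ⟨M1, hM1⟩ := (hKcs.deriv).exists_bound_of_continuous hK'c
    have hM1n : 0 ≤ M1 := le_trans (norm_nonneg _) (hM1 0)
    obtain ⟨Ma, hMan, hMa⟩ := per_bound hac haper
    have hpa' : Function.Periodic (deriv a) 1 := by
      intro x
      have h1 := (had (x + 1)).comp x ((hasDerivAt_id x).add_const (1 : ℝ))
      simp only [Function.comp_def, id_eq] at h1
      rw [show (fun y : ℝ => a (y + 1)) = a from funext haper] at h1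
      rw [h1.deriv]
      ring
    obtain ⟨Ma', hMa'n, hMa'⟩ := per_bound ha'c hpa'
    set B : ℝ := M1 * Ma + M2 * Ma' with hBdef
    have hB : 0 ≤ B := by positivity
    refine ⟨2 * B ^ 2 + 1, by positivity, ?_⟩
    intro ε η hε hη hα1
    set α : ℝ := ε / η with hαdef
    have hα : 0 < α := div_pos hε hη
    -- pointwise bound
    have hpt : ∀ x : ℝ, h x α ^ 2 ≤ (α * (1 + α) * B) ^ 2 := by
      intro x
      have habs : |h x α| ≤ α * (1 + α) * B := by
        rw [hh]
        have e1 : |(-α ^ 2 * deriv K (α * x) * a x - α * K (α * x) * deriv a x)|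
            ≤ |α ^ 2 * deriv K (α * x) * a x| + |α * K (α * x) * deriv a x| := by
          rw [show -α ^ 2 * deriv K (α * x) * a x = -(α ^ 2 * deriv K (α * x) * a x) by ring]
          exact (abs_sub _ _).trans (by rw [abs_neg])
        have e2 : |α ^ 2 * deriv K (α * x) * a x| = α ^ 2 * |deriv K (α * x)| * |a x| := by
          rw [abs_mul, abs_mul, abs_pow, abs_of_pos hα]
        have e3 : |α * K (α * x) * deriv a x| = α * |K (α * x)| * |deriv a x| := by
          rw [abs_mul, abs_mul, abs_of_pos hα]
        have b1 : |deriv K (α * x)| ≤ M1 := by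
          simpa [Real.norm_eq_abs] using hM1 (α * x)
        have b2 : |K (α * x)| ≤ M2 := by
          simpa [Real.norm_eq_abs] using hM2 (α * x)
        have b3 := hMa x
        have b4 := hMa' x
        have pos1 : (0:ℝ) ≤ |deriv K (α * x)| := abs_nonneg _
        have pos2 : (0:ℝ) ≤ |K (α * x)| := abs_nonneg _
        have pos3 : (0:ℝ) ≤ |a x| := abs_nonneg _
        have pos4 : (0:ℝ) ≤ |deriv a x| := abs_nonneg _
        calc |(-α ^ 2 * deriv K (α * x) * a x - α * K (α * x) * deriv a x)|
            ≤ α ^ 2 * |deriv K (α * x)| * |a x| + α * |K (α * x)| * |deriv a x| := by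
              rw [← e2, ← e3]; exact e1
          _ ≤ α ^ 2 * (M1 * Ma) + α * (M2 * Ma') := by
              have g1 : α ^ 2 * |deriv K (α * x)| * |a x| ≤ α ^ 2 * (M1 * Ma) := by
                rw [mul_assoc]
                exact mul_le_mul_of_nonneg_left (mul_le_mul b1 b3 pos3 hM1n) (sq_nonneg α)
              have g2 : α * |K (α * x)| * |deriv a x| ≤ α * (M2 * Ma') := by
                rw [mul_assoc]
                exact mul_le_mul_of_nonneg_left (mul_le_mul b2 b4 pos4 hM2n) hα.le
              linarith
          _ ≤ α * (1 + α) * B := by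
              rw [hBdef]
              nlinarith [mul_nonneg hM1n hMan, mul_nonneg hM2n hMa'n, hα.le, sq_nonneg α]
      rw [← sq_abs]
      exact pow_le_pow_left₀ (abs_nonneg _) habs 2
    set s : Set ℝ := Set.Icc (-(1 / α)) (1 / α) with hsdef
    have hset : (∫ x : ℝ, h x α ^ 2) = ∫ x in s, h x α ^ 2 := by
      refine (setIntegral_eq_integral_of_forall_compl_eq_zero fun x hx => ?_).symm
      rw [hzero α hα x hx]
      ring
    have hint1 : IntegrableOn (fun x => h x α ^ 2) s volume :=
      ((hcontα α).pow 2).integrableOn_Icc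
    have hint2 : IntegrableOn (fun _ : ℝ => (α * (1 + α) * B) ^ 2) s volume := by
      apply (integrableOn_const_iff).mpr
      right
      rw [hsdef]
      exact measure_Icc_lt_top
    have hmono : (∫ x in s, h x α ^ 2) ≤ ∫ _ in s, (α * (1 + α) * B) ^ 2 :=
      setIntegral_mono_on hint1 hint2 measurableSet_Icc (fun x _ => hpt x)
    have hconst : (∫ _ in s, (α * (1 + α) * B) ^ 2)
        = (2 * (1 / α)) * (α * (1 + α) * B) ^ 2 := by
      rw [setIntegral_const, hsdef, Real.volume_real_Icc, smul_eq_mul]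
      congr 1
      have h1α : (0:ℝ) < 1 / α := by positivity
      rw [max_eq_left (by linarith)]
      ring
    have hval : (2 * (1 / α)) * (α * (1 + α) * B) ^ 2 = 2 * α * (1 + α) ^ 2 * B ^ 2 := by
      field_simp
    have hfin : 2 * α * (1 + α) ^ 2 * B ^ 2 ≤ (2 * B ^ 2 + 1) * (1 + α) ^ 2 := by
      nlinarith [sq_nonneg (1 + α), sq_nonneg B, hα.le,
        mul_nonneg (sq_nonneg (1 + α)) (sq_nonneg B)]
    rw [hset]
    calc (∫ x in s, h x α ^ 2) ≤ _ := hmono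
      _ = 2 * α * (1 + α) ^ 2 * B ^ 2 := by rw [hconst, hval]
      _ ≤ (2 * B ^ 2 + 1) * (1 + α) ^ 2 := hfin
end
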